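/- arXiv:1906.01523 — 4 statements merged into one kernel-verified Lean document; each statement's English description precedes it below -/
import Mathlib

section
/- Let X be a compact metric space, f : X → X continuous, and Z ⊆ X a nonempty closed subset with f(Z) ⊆ Z. Suppose that for every compact set C ⊆ X \ Z, the supremum over x ∈ C of dist(f^[n](x), Z) tends to 0 as n → ∞ (i.e. the distance of f^[n](x) to Z tends to 0 uniformly on every compact subset of X \ Z). Then h_top(f) = h_top(f|Z). -/
set_option linter.unusedSectionVars false

open Dynamics Set Uniformity UniformSpace Filter ENNReal EReal
open scoped SetRel

namespace DouadyEntropyAux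

variable {X : Type*} [MetricSpace X] [CompactSpace X]

variable {X : Type*} [MetricSpace X] [CompactSpace X]

/-- Core counting lemma: if `s` is a `(V,n)`-cover of `Z`, `sM` a `(V,M)`-cover of `univ`,
and every orbit that leaves `G := ⋃ y ∈ s, ball y (dynEntourage f V n)` returns to `G`
within `M` steps (for good), then `univ` has `(V ○ V, N)`-covers of polynomial-in-`N`
times `c^(N/n)` cardinality. -/
private lemma counting
    {f : X → X} {Z : Set X} (hZne : Z.Nonempty)
    {V : Set (X × X)} (hVsymm : SetRel.IsSymm V)
    {n M : ℕ} (hn : 0 < n)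
    {s sM : Finset X}
    (hs : IsDynCoverOf f Z V n s)
    (hsM : IsDynCoverOf f Set.univ V M sM)
    (hG : ∀ x : X, ∀ m, f^[m] x ∉ (⋃ y ∈ s, ball y (dynEntourage f V n)) →
        ∀ j, M ≤ j → f^[m + j] x ∈ (⋃ y ∈ s, ball y (dynEntourage f V n)))
    (N : ℕ) :
    coverMincard f Set.univ (V ○ V) N ≤ ((N + 1) * sM.card * s.card ^ (N / n + 2) : ℕ) := by
  classical
  obtain ⟨x₀, hx₀⟩ := hZne
  obtain ⟨y₀, hy₀⟩ := hs.nonempty ⟨x₀, hx₀⟩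
  set G : Set X := ⋃ y ∈ s, ball y (dynEntourage f V n) with hGdef
  -- choice functions
  have hGmem : ∀ y ∈ G, ∃ z ∈ (s : Set X), y ∈ ball z (dynEntourage f V n) := by
    intro y hy
    rw [hGdef] at hy
    simpa only [mem_iUnion, exists_prop, Finset.mem_coe] using hy
  choose! cs cs_mem cs_ball using hGmem
  have hMmem : ∀ y : X, ∃ z ∈ (sM : Set X), y ∈ ball z (dynEntourage f V M) := by
    intro y
    obtain ⟨z, hz, hyz⟩ := hsM (mem_univ y)
    haveI := hVsymm
    exact ⟨z, hz, (isSymm_dynEntourage (T := f) (U := V) (n := M)).symm _ _ hyz⟩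
  choose cM cM_mem cM_ball using hMmem
  -- the first bad time (or N)
  set t : X → ℕ := fun x => if h : ∃ m, m < N ∧ f^[m] x ∉ G then Nat.find h else N with htdef
  have t_le : ∀ x, t x ≤ N := by
    intro x
    simp only [htdef]
    split_ifs with h
    · exact (Nat.find_spec h).1.le
    · exact le_rfl
  have good1 : ∀ x, ∀ m, m < t x → f^[m] x ∈ G := by
    intro x m hm
    by_contra hbad
    simp only [htdef] at hm
    split_ifs at hm with h
    · exact absurd ⟨(hm.trans (Nat.find_spec h).1), hbad⟩ (Nat.find_min h hm)
    · exact h ⟨m, hm, hbad⟩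
  have good2 : ∀ x, ∀ m, m < N → t x + M ≤ m → f^[m] x ∈ G := by
    intro x m hmN hm
    simp only [htdef] at hm
    split_ifs at hm with h
    · have hspec := Nat.find_spec h
      have : f^[Nat.find h + (m - Nat.find h)] x ∈ G :=
        hG x (Nat.find h) hspec.2 (m - Nat.find h) (by omega)
      rwa [Nat.add_sub_cancel' (by omega)] at this
    · by_contra hbad
      exact h ⟨m, hmN, hbad⟩
  -- number of "pre-window" segments
  set P : X → ℕ := fun x => (t x + n - 1) / n with hPdef
  have hPiff : ∀ x j, j < P x ↔ j * n < t x := by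
    intro x j
    simp only [hPdef]
    constructor
    · intro hj
      have := (Nat.le_div_iff_mul_le hn).1 hj
      rw [Nat.succ_mul] at this
      omega
    · intro hj
      have h1 : (j + 1) * n ≤ t x + n - 1 := by rw [add_mul, one_mul]; omega
      have h2 := (Nat.le_div_iff_mul_le hn).2 h1
      omega
  -- code function for the regular segments
  set g : X → ℕ → X := fun x j =>
    if j < P x then cs (f^[j * n] x)
    else if t x + M + (j - P x) * n < N then cs (f^[t x + M + (j - P x) * n] x) else y₀
    with hgdef
  have g_mem : ∀ x j, g x j ∈ (s : Set X) := by
    intro x j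
    simp only [hgdef]
    split_ifs with h1 h2
    · exact cs_mem _ (good1 x _ ((hPiff x j).1 h1))
    · exact cs_mem _ (good2 x _ h2 (Nat.le_add_right _ _))
    · exact hy₀
  set code : X → Fin (N + 1) × (Fin (N / n + 2) → {y // y ∈ s}) × {y // y ∈ sM} :=
    fun x => (⟨t x, Nat.lt_succ_of_le (t_le x)⟩,
      fun j => ⟨g x j.1, g_mem x j.1⟩,
      ⟨cM (f^[t x] x), cM_mem _⟩) with hcodedef
  -- closeness of points with the same code
  have sub : ∀ (w : X) (a m k : ℕ) (x x' : X), a ≤ k → k - a < m →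
      f^[a] x ∈ ball w (dynEntourage f V m) → f^[a] x' ∈ ball w (dynEntourage f V m) →
      (f^[k] x', f^[k] x) ∈ V ○ V := by
    intro w a m k x x' hak hkm hbx hbx'
    have e : ∀ y : X, f^[k - a] (f^[a] y) = f^[k] y := by
      intro y
      rw [← Function.iterate_add_apply, Nat.sub_add_cancel hak]
    have h1 : (f^[k - a] w, f^[k] x) ∈ V := by
      have := mem_dynEntourage.1 hbx (k - a) hkm
      rwa [e x] at this
    have h2 : (f^[k - a] w, f^[k] x') ∈ V := by
      have := mem_dynEntourage.1 hbx' (k - a) hkm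
      rwa [e x'] at this
    exact ⟨f^[k - a] w, hVsymm.symm _ _ h2, h1⟩
  have close : ∀ x x', code x = code x' → x ∈ ball x' (dynEntourage f (V ○ V) N) := by
    intro x x' hcode
    have ht : t x = t x' := by
      have := congrArg (fun i => i.1.1) hcode
      simpa [hcodedef] using this
    have hgj : ∀ j, j < N / n + 2 → g x j = g x' j := by
      intro j hj
      have := congrArg (fun i => (i.2.1 ⟨j, hj⟩ : X)) hcode
      simpa [hcodedef] using this
    have hw : cM (f^[t x] x) = cM (f^[t x'] x') := by
      have := congrArg (fun i => (i.2.2 : X)) hcode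
      simpa [hcodedef] using this
    have hP : P x = P x' := by simp only [hPdef, ht]
    rw [mem_ball_dynEntourage]
    intro k hk
    show (f^[k] x', f^[k] x) ∈ V ○ V
    rcases lt_or_ge k (t x) with hk1 | hk1
    · -- pre-window
      obtain ⟨j, r, hrn, hjr⟩ : ∃ j r : ℕ, r < n ∧ k = j * n + r :=
        ⟨k / n, k % n, Nat.mod_lt _ hn, by rw [mul_comm, Nat.div_add_mod]⟩
      have hjn : j * n ≤ k := by omega
      have hmod : k - j * n < n := by omega
      have hPre : j < P x := (hPiff x j).2 (lt_of_le_of_lt hjn hk1)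
      have hPre' : j < P x' := hP ▸ hPre
      have hjK : j < N / n + 2 := by
        have h1 : j ≤ k / n := (Nat.le_div_iff_mul_le hn).2 hjn
        have h2 : k / n ≤ N / n := Nat.div_le_div_right hk.le
        omega
      have e1 : g x j = cs (f^[j * n] x) := by simp only [hgdef]; rw [if_pos hPre]
      have e2 : g x' j = cs (f^[j * n] x') := by simp only [hgdef]; rw [if_pos hPre']
      refine sub (cs (f^[j * n] x)) (j * n) n k x x' hjn hmod
        (cs_ball _ (good1 x _ ((hPiff x j).1 hPre))) ?_
      have : cs (f^[j * n] x) = cs (f^[j * n] x') := by rw [← e1, ← e2, hgj j hjK]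
      rw [this]
      exact cs_ball _ (good1 x' _ (by rw [← ht]; exact lt_of_le_of_lt hjn hk1))
    · rcases lt_or_ge k (t x + M) with hk2 | hk2
      · -- window
        refine sub (cM (f^[t x] x)) (t x) M k x x' hk1 (by omega) (cM_ball _) ?_
        rw [hw, ht]
        exact cM_ball _
      · -- post-window
        obtain ⟨q, r, hrn, hqr⟩ : ∃ q r : ℕ, r < n ∧ k - t x - M = q * n + r :=
          ⟨(k - t x - M) / n, (k - t x - M) % n, Nat.mod_lt _ hn,
            by rw [mul_comm, Nat.div_add_mod]⟩
        set j := P x + q with hjdef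
        have hble : t x + M + q * n ≤ k := by omega
        have hmod : k - (t x + M + q * n) < n := by omega
        have hbN : t x + M + q * n < N := lt_of_le_of_lt hble hk
        have hjP : ¬ j < P x := by omega
        have hjP' : ¬ j < P x' := by rw [← hP]; exact hjP
        have hjK : j < N / n + 2 := by
          have hdd : ∀ a b : ℕ, a / n + b / n ≤ (a + b) / n := by
            intro a b
            refine (Nat.le_div_iff_mul_le hn).2 ?_
            rw [add_mul]
            exact Nat.add_le_add (Nat.div_mul_le_self a n) (Nat.div_mul_le_self b n)
          have hqle : q ≤ (k - t x - M) / n := (Nat.le_div_iff_mul_le hn).2 (by omega)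
          have h1 : j ≤ (t x + n - 1 + (k - t x - M)) / n := by
            simp only [hjdef, hPdef]
            exact (Nat.add_le_add le_rfl hqle).trans (hdd _ _)
          have h2 : t x + n - 1 + (k - t x - M) ≤ N - 1 + n := by omega
          have h3 : (N - 1 + n) / n = (N - 1) / n + 1 := Nat.add_div_right _ hn
          have h4 : (N - 1) / n ≤ N / n := Nat.div_le_div_right (by omega)
          have h5 := (Nat.div_le_div_right h2).trans_eq h3
          omega
        have hsub : j - P x = q := by omega
        have hsub' : j - P x' = q := by omega
        have e1 : g x j = cs (f^[t x + M + q * n] x) := by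
          simp only [hgdef]
          rw [if_neg hjP, hsub, if_pos hbN]
        have e2 : g x' j = cs (f^[t x + M + q * n] x') := by
          simp only [hgdef]
          rw [if_neg hjP', hsub', ← ht, if_pos hbN]
        refine sub (cs (f^[t x + M + q * n] x)) (t x + M + q * n) n k x x' hble hmod
          (cs_ball _ (good2 x _ hbN (Nat.le_add_right _ _))) ?_
        have : cs (f^[t x + M + q * n] x) = cs (f^[t x + M + q * n] x') := by
          rw [← e1, ← e2, hgj j hjK]
        rw [this]
        exact cs_ball _ (good2 x' _ hbN (by rw [← ht]; exact Nat.le_add_right _ _))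
  -- representatives
  set rep : Fin (N + 1) × (Fin (N / n + 2) → {y // y ∈ s}) × {y // y ∈ sM} → X :=
    fun i => if h : ∃ x, code x = i then h.choose else x₀ with hrepdef
  set T : Finset X := Finset.image rep Finset.univ with hTdef
  have Tcover : IsDynCoverOf f Set.univ (V ○ V) N T := by
    intro x _
    have hx : ∃ y, code y = code x := ⟨x, rfl⟩
    have hrep : code (rep (code x)) = code x := by
      simp only [hrepdef]
      rw [dif_pos hx]
      exact hx.choose_spec
    refine ⟨rep (code x), ?_, close _ x hrep⟩
    exact Finset.mem_coe.2 (Finset.mem_image.2 ⟨code x, Finset.mem_univ _, rfl⟩)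
  have Tcard : T.card ≤ (N + 1) * sM.card * s.card ^ (N / n + 2) := by
    simp only [hTdef]
    refine Finset.card_image_le.trans ?_
    rw [Finset.card_univ]
    simp only [Fintype.card_prod, Fintype.card_fin, Fintype.card_fun, Fintype.card_coe]
    ring_nf
    exact le_rfl
  exact Tcover.coverMincard_le_card.trans (by exact_mod_cast Tcard)

private lemma real_log_lim {A : ℕ} (hA : 1 ≤ A) :
    Filter.Tendsto (fun N : ℕ => Real.log (((N + 1) * A : ℕ) : ℝ) / (N : ℝ))
      Filter.atTop (nhds 0) := by
  have h0 : Tendsto (fun x : ℝ => Real.log x / x) atTop (nhds 0) :=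
    Real.isLittleO_log_id_atTop.tendsto_div_nhds_zero
  have h1 : Tendsto (fun N : ℕ => (N : ℝ) + 1) atTop atTop :=
    tendsto_atTop_add_const_right atTop 1 tendsto_natCast_atTop_atTop
  have h2 : Tendsto (fun N : ℕ => Real.log ((N : ℝ) + 1) / ((N : ℝ) + 1)) atTop (nhds 0) :=
    h0.comp h1
  have h3 : Tendsto (fun N : ℕ => ((N : ℝ) + 1) / (N : ℝ)) atTop (nhds 1) := by
    have h : Tendsto (fun N : ℕ => (1 : ℝ) + 1 / (N : ℝ)) atTop (nhds (1 + 0)) :=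
      Tendsto.add tendsto_const_nhds tendsto_one_div_atTop_nhds_zero_nat
    rw [add_zero] at h
    refine h.congr' ?_
    filter_upwards [eventually_ge_atTop 1] with N hN
    have hN0 : (N : ℝ) ≠ 0 := by
      have : (0 : ℝ) < N := by exact_mod_cast hN
      exact this.ne'
    field_simp
  have h4 : Tendsto (fun N : ℕ => Real.log ((N : ℝ) + 1) / (N : ℝ)) atTop (nhds 0) := by
    have h := h2.mul h3
    rw [zero_mul] at h
    refine h.congr' ?_
    filter_upwards [eventually_ge_atTop 1] with N hN
    have hN0 : (N : ℝ) ≠ 0 := by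
      have : (0 : ℝ) < N := by exact_mod_cast hN
      exact this.ne'
    have hN1 : (N : ℝ) + 1 ≠ 0 := by positivity
    field_simp
  have h5 : Tendsto (fun N : ℕ => (Real.log ((N : ℝ) + 1) + Real.log (A : ℝ)) / (N : ℝ))
      atTop (nhds 0) := by
    have h6 := h4.add (tendsto_const_div_atTop_nhds_zero_nat (Real.log (A : ℝ)))
    rw [add_zero] at h6
    exact h6.congr fun N => (add_div _ _ _).symm
  refine h5.congr fun N => ?_
  have hA0 : (A : ℝ) ≠ 0 := by
    have : (0 : ℝ) < A := by exact_mod_cast hA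
    exact this.ne'
  have hN1 : ((N : ℝ) + 1) ≠ 0 := by positivity
  rw [Nat.cast_mul, Nat.cast_add, Nat.cast_one, Real.log_mul hN1 hA0]

private lemma term_le {c n N : ℕ} (hc : 1 ≤ c) (hN : 1 ≤ N) :
    (((N / n : ℕ) : EReal) * ENNReal.log (c : ℝ≥0∞)) / (N : EReal)
      ≤ ENNReal.log (c : ℝ≥0∞) / (n : EReal) := by
  have hlogc0 : 0 ≤ ENNReal.log (c : ℝ≥0∞) := zero_le_log_iff.2 (by exact_mod_cast hc)
  have hNb : (N : EReal) ≠ ⊥ := natCast_ne_bot N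
  have hNt : (N : EReal) ≠ ⊤ := natCast_ne_top N
  have hN0 : (N : EReal) ≠ 0 := by
    rw [← Nat.cast_zero, ne_eq, EReal.natCast_eq_iff]
    omega
  calc (((N / n : ℕ) : EReal) * ENNReal.log (c : ℝ≥0∞)) / (N : EReal)
      ≤ (((N : EReal) / (n : EReal)) * ENNReal.log (c : ℝ≥0∞)) / (N : EReal) :=
        div_le_div_right_of_nonneg (Nat.cast_nonneg' N)
          (mul_le_mul_of_nonneg_right (natCast_div_le N n) hlogc0)
    _ = ENNReal.log (c : ℝ≥0∞) / (n : EReal) := by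
        rw [mul_comm ((N : EReal) / (n : EReal)) (ENNReal.log (c : ℝ≥0∞)),
          EReal.mul_div, EReal.div_div, mul_comm (n : EReal) (N : EReal), ← EReal.div_div,
          mul_comm (ENNReal.log (c : ℝ≥0∞)) (N : EReal), ← EReal.mul_div,
          EReal.mul_div_cancel hNb hNt hN0]

private lemma entourage_bound
    {f : X → X} (hf : Continuous f)
    {Z : Set X} (hZclosed : IsClosed Z) (hZne : Z.Nonempty) (hZinv : MapsTo f Z Z)
    (hattr : ∀ C : Set X, IsCompact C → C ⊆ Zᶜ →
      Tendsto (fun n : ℕ => ⨆ x ∈ C, Metric.infDist (f^[n] x) Z) atTop (nhds 0))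
    {ε : ℝ} (hε : 0 < ε) {n : ℕ} (hn : 0 < n) :
    coverEntropyEntourage f Set.univ
        ({p : X × X | dist p.1 p.2 < ε} ○ {p : X × X | dist p.1 p.2 < ε})
      ≤ log (coverMincard f Z {p : X × X | dist p.1 p.2 < ε} n) / n := by
  classical
  set V : Set (X × X) := {p : X × X | dist p.1 p.2 < ε} with hVdef
  have V_uni : V ∈ 𝓤 X := Metric.dist_mem_uniformity hε
  have V_symm : SetRel.IsSymm V := by
    refine ⟨fun a b h => ?_⟩
    simp only [hVdef, Set.mem_setOf_eq] at h ⊢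
    rwa [dist_comm]
  have V_open : IsOpen V := isOpen_lt continuous_dist continuous_const
  have hZcomp : IsCompact Z := hZclosed.isCompact
  -- minimal (V, n)-cover of Z
  obtain ⟨s, hs, hscard⟩ := (coverMincard_finite_iff f Z V n).1
    (coverMincard_finite_of_isCompact_invariant hZcomp hZinv V_uni n)
  set G : Set X := ⋃ y ∈ s, ball y (dynEntourage f V n) with hGdef
  have G_open : IsOpen G := isOpen_biUnion fun y _ => isOpen_ball y (isOpen.dynEntourage hf V_open n)
  have G_Z : Z ⊆ G := by
    intro z hz
    obtain ⟨y, hy, hzy⟩ := hs hz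
    haveI := V_symm
    exact mem_iUnion₂.2 ⟨y, hy, (isSymm_dynEntourage (T := f) (U := V) (n := n)).symm _ _ hzy⟩
  obtain ⟨δ, hδ, hthick⟩ := hZcomp.exists_thickening_subset_open G_open G_Z
  have hCcomp : IsCompact Gᶜ := G_open.isClosed_compl.isCompact
  have hCZ : Gᶜ ⊆ Zᶜ := Set.compl_subset_compl.2 G_Z
  obtain ⟨M, hM⟩ := eventually_atTop.1 ((hattr Gᶜ hCcomp hCZ).eventually_lt_const hδ)
  have hG : ∀ x : X, ∀ m, f^[m] x ∉ G → ∀ j, M ≤ j → f^[m + j] x ∈ G := by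
    intro x m hxm j hj
    have hbd : BddAbove (Set.range fun y => ⨆ _ : y ∈ Gᶜ, Metric.infDist (f^[j] y) Z) := by
      obtain ⟨B, hB⟩ :=
        (hCcomp.image ((Metric.continuous_infDist_pt Z).comp (hf.iterate j))).bddAbove
      refine ⟨max B 0, ?_⟩
      rintro r ⟨y, rfl⟩
      show (⨆ _ : y ∈ Gᶜ, Metric.infDist (f^[j] y) Z) ≤ max B 0
      by_cases hy : y ∈ Gᶜ
      · rw [ciSup_pos hy]
        refine le_max_of_le_left (hB ?_)
        exact ⟨y, hy, rfl⟩
      · rw [ciSup_neg hy, Real.sSup_empty]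
        exact le_max_right _ _
    have h1 : Metric.infDist (f^[j] (f^[m] x)) Z ≤ ⨆ y ∈ Gᶜ, Metric.infDist (f^[j] y) Z := by
      calc Metric.infDist (f^[j] (f^[m] x)) Z
          = ⨆ _ : f^[m] x ∈ Gᶜ, Metric.infDist (f^[j] (f^[m] x)) Z :=
            (ciSup_pos (f := fun _ : f^[m] x ∈ Gᶜ => Metric.infDist (f^[j] (f^[m] x)) Z)
              hxm).symm
        _ ≤ ⨆ y ∈ Gᶜ, Metric.infDist (f^[j] y) Z := le_ciSup hbd (f^[m] x)
    have h2 : Metric.infDist (f^[j] (f^[m] x)) Z < δ := h1.trans_lt (hM j hj)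
    have h3 : f^[j] (f^[m] x) ∈ Metric.thickening δ Z :=
      (Metric.mem_thickening_iff_infDist_lt hZne).2 h2
    rw [add_comm m j, Function.iterate_add_apply]
    exact hthick h3
  have hG' : ∀ x : X, ∀ m, f^[m] x ∉ (⋃ y ∈ s, ball y (dynEntourage f V n)) →
      ∀ j, M ≤ j → f^[m + j] x ∈ (⋃ y ∈ s, ball y (dynEntourage f V n)) := by
    rw [← hGdef]
    exact hG
  -- a (V, M)-cover of the whole space
  obtain ⟨sM, hsM⟩ := exists_isDynCoverOf_of_isCompact_uniformContinuous isCompact_univ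
    (CompactSpace.uniformContinuous_of_continuous hf) V_uni M
  have hcount := counting hZne V_symm hn hs hsM hG'
  -- cardinality bounds
  have hc1 : 1 ≤ s.card :=
    Finset.card_pos.2 (Finset.coe_nonempty.1 (hs.nonempty hZne))
  have hsM1 : 1 ≤ sM.card :=
    Finset.card_pos.2 (Finset.coe_nonempty.1 (hsM.nonempty ⟨hZne.some, mem_univ _⟩))
  set c := s.card with hcdef
  set A := sM.card * c ^ 2 with hAdef
  have hA1 : 1 ≤ A := Nat.one_le_iff_ne_zero.2 (Nat.mul_ne_zero (by omega)
    (pow_ne_zero _ (by omega)))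
  -- rewrite the goal using the minimal cover cardinality
  rw [← hscard, ENat.toENNReal_coe]
  -- pointwise upper bound for the entropy sequence
  have hub : ∀ N : ℕ,
      log (coverMincard f Set.univ (V ○ V) N) / (N : EReal)
        ≤ log (((N + 1) * A : ℕ) : ℝ≥0∞) / (N : EReal)
          + (((N / n : ℕ) : EReal) * log (c : ℝ≥0∞)) / (N : EReal) := by
    intro N
    have h1 : coverMincard f Set.univ (V ○ V) N ≤ (((N + 1) * A * c ^ (N / n) : ℕ) : ℕ∞) := by
      have hnat : (N + 1) * sM.card * c ^ (N / n + 2) = (N + 1) * A * c ^ (N / n) := by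
        rw [hAdef, pow_add]; ring
      exact (hcount N).trans (le_of_eq (by rw [hnat]))
    have h2 : log (coverMincard f Set.univ (V ○ V) N)
        ≤ log (((N + 1) * A : ℕ) : ℝ≥0∞) + ((N / n : ℕ) : EReal) * log (c : ℝ≥0∞) := by
      have h3 : log (coverMincard f Set.univ (V ○ V) N)
          ≤ log ((((N + 1) * A * c ^ (N / n) : ℕ) : ℕ∞) : ℝ≥0∞) :=
        log_monotone (ENat.toENNReal_le.2 h1)
      refine h3.trans (le_of_eq ?_)
      rw [ENat.toENNReal_coe]
      have : (((N + 1) * A * c ^ (N / n) : ℕ) : ℝ≥0∞)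
          = ((((N + 1) * A : ℕ) : ℝ≥0∞)) * ((c : ℝ≥0∞)) ^ (N / n) := by
        push_cast
        ring
      rw [this, log_mul_add, log_pow]
    have h4 : 0 ≤ log (((N + 1) * A : ℕ) : ℝ≥0∞) := by
      refine zero_le_log_iff.2 ?_
      have : 1 ≤ (N + 1) * A := Nat.one_le_iff_ne_zero.2 (by positivity)
      exact_mod_cast this
    have h5 : 0 ≤ ((N / n : ℕ) : EReal) * log (c : ℝ≥0∞) :=
      mul_nonneg (Nat.cast_nonneg' _) (zero_le_log_iff.2 (by exact_mod_cast hc1))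
    calc log (coverMincard f Set.univ (V ○ V) N) / (N : EReal)
        ≤ (log (((N + 1) * A : ℕ) : ℝ≥0∞) + ((N / n : ℕ) : EReal) * log (c : ℝ≥0∞)) / (N : EReal) :=
          div_le_div_right_of_nonneg (Nat.cast_nonneg' N) h2
      _ = _ := div_right_distrib_of_nonneg h4 h5
  -- the first sequence tends to `0`
  set aseq : ℕ → EReal := fun N => log (((N + 1) * A : ℕ) : ℝ≥0∞) / (N : EReal) with haseq
  have ha0 : Tendsto aseq atTop (nhds 0) := by
    have heq : ∀ᶠ N in atTop,
        ((Real.log (((N + 1) * A : ℕ) : ℝ) / (N : ℝ) : ℝ) : EReal) = aseq N := by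
      filter_upwards [eventually_ge_atTop 1] with N hN
      simp only [haseq]
      have h1 : log (((N + 1) * A : ℕ) : ℝ≥0∞) = (Real.log (((N + 1) * A : ℕ) : ℝ) : EReal) := by
        have hpos : 0 < ((((N + 1) * A : ℕ) : ℝ≥0∞)).toReal := by
          rw [ENNReal.toReal_natCast]
          have : 0 < (N + 1) * A := by positivity
          exact_mod_cast this
        rw [log_pos_real' hpos, ENNReal.toReal_natCast]
      rw [h1, EReal.coe_div, EReal.coe_coe_eq_natCast]
    have := (EReal.tendsto_coe.2 (real_log_lim hA1)).congr' heq
    rwa [EReal.coe_zero] at this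
  have hlimsupa : atTop.limsup aseq = 0 := ha0.limsup_eq
  -- conclude with the limsup computation
  have hle : ∀ᶠ N in atTop, log (coverMincard f Set.univ (V ○ V) N) / (N : EReal)
      ≤ aseq N + log (c : ℝ≥0∞) / (n : EReal) := by
    filter_upwards [eventually_ge_atTop 1] with N hN
    exact (hub N).trans (add_le_add_right (term_le hc1 hN) _)
  have hmain : atTop.limsup (fun N : ℕ => log (coverMincard f Set.univ (V ○ V) N) / (N : EReal))
      ≤ log (c : ℝ≥0∞) / (n : EReal) := by
    refine (limsup_le_limsup hle).trans ?_
    have hconst : atTop.limsup (fun _ : ℕ => log (c : ℝ≥0∞) / (n : EReal))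
        = log (c : ℝ≥0∞) / (n : EReal) := limsup_const _
    have hadd := @limsup_add_le ℕ atTop aseq (fun _ => log (c : ℝ≥0∞) / (n : EReal))
      (Or.inl (hlimsupa ▸ EReal.zero_ne_bot)) (Or.inl (hlimsupa ▸ EReal.zero_ne_top))
    rw [hlimsupa, hconst, zero_add] at hadd
    exact hadd
  exact hmain

end DouadyEntropyAux

open Dynamics DouadyEntropyAux


open Dynamics DouadyEntropyAux

/-- Proposition 2.3 (Douady): if `Z` is a nonempty closed invariant subset of a compact
metric space `X` and the orbits of `f` approach `Z` uniformly on every compact subset of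
`X \ Z`, then the topological entropy of `f` on `X` equals its entropy on `Z`. -/
theorem coverEntropy_eq_coverEntropy_of_uniformly_attracting
    {X : Type*} [MetricSpace X] [CompactSpace X]
    (f : X → X) (hf : Continuous f)
    (Z : Set X) (hZclosed : IsClosed Z) (hZne : Z.Nonempty) (hZinv : Set.MapsTo f Z Z)
    (hattr : ∀ C : Set X, IsCompact C → C ⊆ Zᶜ →
      Filter.Tendsto (fun n : ℕ => ⨆ x ∈ C, Metric.infDist (f^[n] x) Z)
        Filter.atTop (nhds 0)) :
    coverEntropy f (Set.univ : Set X) = coverEntropy f Z := by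
  apply le_antisymm
  · -- the hard direction
    rw [← coverEntropyInf_eq_coverEntropy f hZinv]
    refine iSup₂_le fun U hU => ?_
    obtain ⟨ε, hε, hεU⟩ := Metric.mem_uniformity_dist.1 hU
    set V : Set (X × X) := {p : X × X | dist p.1 p.2 < ε / 2} with hVdef
    have hVU : V ○ V ⊆ U := by
      rintro ⟨a, b⟩ ⟨z, h1, h2⟩
      refine hεU ?_
      calc dist a b ≤ dist a z + dist z b := dist_triangle a z b
        _ < ε / 2 + ε / 2 := add_lt_add h1 h2
        _ = ε := add_halves ε
    have hV_uni : V ∈ uniformity X := Metric.dist_mem_uniformity (half_pos hε)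
    refine (coverEntropyEntourage_antitone f Set.univ hVU).trans ?_
    refine le_trans ((le_liminf_of_le) (Filter.eventually_atTop.2
        ⟨1, fun n hn => entourage_bound hf hZclosed hZne hZinv hattr (half_pos hε) hn⟩))
      (coverEntropyInfEntourage_le_coverEntropyInf f Z hV_uni)
  · -- monotonicity in the subset
    refine iSup₂_mono fun U hU => ?_
    refine Filter.limsup_le_limsup (Filter.Eventually.of_forall fun N => ?_) ?_ ?_
    · refine EReal.div_le_div_right_of_nonneg (Nat.cast_nonneg' N)
        (ENNReal.log_monotone (ENat.toENNReal_le.2 ?_))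
      exact le_iInf₂ fun t ht => iInf₂_le t (Set.Subset.trans (Set.subset_univ Z) ht)
    · exact Filter.isCobounded_le_of_bot
    · exact Filter.isBoundedUnder_of_eventually_le (Filter.Eventually.of_forall fun _ => le_top)
end

section
/- Let X and Y be compact metric spaces, f : X → X and g : Y → Y continuous, and π : Y → X a continuous surjection satisfying π ∘ g = f ∘ π. Then h_top(f) ≤ h_top(g). If moreover there exists M ∈ ℕ such that every fiber π⁻¹({x}) (x ∈ X) has at most M elements, then h_top(f) = h_top(g). -/
open Dynamics

namespace DouadyAux

open Set Uniformity UniformSpace Filter ENNReal EReal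
open scoped SetRel

lemma fiber_cover {X Y : Type*} [UniformSpace X] [UniformSpace Y] [CompactSpace Y]
    [T2Space X] [CompactSpace X]
    {π : Y → X} (hπ : Continuous π) {M : ℕ}
    (hfib : ∀ x : X, (π ⁻¹' {x}).Finite ∧ (π ⁻¹' {x}).ncard ≤ M)
    {V : Set (Y × Y)} (hV : V ∈ 𝓤 Y) :
    ∃ U ∈ 𝓤 X, ∀ x : X, ∃ t : Finset Y, t.card ≤ M ∧
      π ⁻¹' (ball x U) ⊆ ⋃ y ∈ t, ball y V := by
  obtain ⟨V', ⟨hV'u, hV'o⟩, hV'V⟩ := uniformity_hasBasis_open.mem_iff.1 hV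
  set t : X → Finset Y := fun x => (hfib x).1.toFinset with ht
  set G : X → Set Y := fun x => ⋃ y ∈ t x, ball y V' with hG
  have hGopen : ∀ x, IsOpen (G x) := by
    intro x
    refine isOpen_biUnion fun y _ => ?_
    exact UniformSpace.isOpen_ball y hV'o
  set c : X → Set X := fun x => (π '' (G x)ᶜ)ᶜ with hc
  have hcopen : ∀ x, IsOpen (c x) := by
    intro x
    rw [isOpen_compl_iff]
    exact (((hGopen x).isClosed_compl.isCompact).image hπ).isClosed
  have hfibG : ∀ x, π ⁻¹' {x} ⊆ G x := by
    intro x y hy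
    have hyt : y ∈ t x := by simpa [ht] using hy
    exact mem_biUnion hyt (UniformSpace.mem_ball_self y hV'u)
  have hmem : ∀ x, x ∈ c x := by
    intro x
    simp only [hc, mem_compl_iff, mem_image, not_exists]
    rintro y ⟨hy, rfl⟩
    exact hy (hfibG (π y) rfl)
  have hpre : ∀ x, π ⁻¹' (c x) ⊆ G x := by
    intro x y hy
    by_contra hyG
    exact hy ⟨y, hyG, rfl⟩
  obtain ⟨U, hU, hball⟩ := lebesgue_number_lemma isCompact_univ hcopen
    (fun x _ => mem_iUnion.2 ⟨x, hmem x⟩)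
  refine ⟨U, hU, fun x => ?_⟩
  obtain ⟨x₀, hx₀⟩ := hball x (mem_univ x)
  refine ⟨t x₀, ?_, ?_⟩
  · rw [ht, ← Set.ncard_eq_toFinset_card (π ⁻¹' {x₀}) (hfib x₀).1]
    exact (hfib x₀).2
  · refine (preimage_mono hx₀).trans ((hpre x₀).trans ?_)
    exact iUnion₂_mono fun y _ => ball_mono hV'V y

lemma core_mincard {X Y : Type*} {F : X → X} {G : Y → Y} {π : Y → X}
    (hsemi : Function.Semiconj π G F) [Nonempty Y]
    {M : ℕ} {U : Set (X × X)} {W : Set (Y × Y)} (W_symm : SetRel.IsSymm W) (U_symm : SetRel.IsSymm U)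
    (hUW : ∀ x : X, ∃ t : Finset Y, t.card ≤ M ∧ π ⁻¹' (ball x U) ⊆ ⋃ y ∈ t, ball y W)
    (hM : 0 < M) (n : ℕ) :
    coverMincard G Set.univ (W ○ W) n ≤ coverMincard F Set.univ U n * (M : ℕ∞) ^ n := by
  classical
  rcases eq_top_or_lt_top (coverMincard F Set.univ U n) with htop | hfin
  · rw [htop, ENat.top_mul (by positivity)]
    exact le_top
  obtain ⟨s, s_cover, s_card⟩ := (coverMincard_finite_iff F Set.univ U n).1 hfin
  choose t htcard htsub using hUW
  -- for `x : X` and `σ : Fin n → Y`, the set of points whose orbit tracks `σ` up to `W`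
  set A : X → (Fin n → Y) → Set Y :=
    fun _ σ => ⋂ i : Fin n, G^[(i : ℕ)] ⁻¹' (ball (σ i) W) with hA
  set w : X → (Fin n → Y) → Y :=
    fun x σ => if h : (A x σ).Nonempty then h.choose else Classical.arbitrary Y with hw
  set c : Finset Y := s.biUnion
    (fun x => (Fintype.piFinset (fun i : Fin n => t (F^[(i : ℕ)] x))).image (w x)) with hc
  have c_cover : IsDynCoverOf G Set.univ (W ○ W) n (c : Set Y) := by
    intro y _
    obtain ⟨x, x_s, hyx⟩ := s_cover (mem_univ (π y))
    have hdyn : ∀ i : Fin n, G^[(i : ℕ)] y ∈ π ⁻¹' (ball (F^[(i : ℕ)] x) U) := by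
      intro i
      have := mem_dynEntourage.1 hyx (i : ℕ) i.2
      simp only [mem_preimage, ball, (hsemi.iterate_right (i : ℕ)) y]
      exact U_symm.symm _ _ this
    have hchoice : ∀ i : Fin n, ∃ z ∈ t (F^[(i : ℕ)] x), G^[(i : ℕ)] y ∈ ball z W := by
      intro i
      have := htsub (F^[(i : ℕ)] x) (hdyn i)
      simpa only [mem_iUnion, exists_prop] using this
    choose σ hσt hσball using hchoice
    have hyA : y ∈ A x σ := mem_iInter.2 fun i => hσball i
    have hAne : (A x σ).Nonempty := ⟨y, hyA⟩
    have hwA : w x σ ∈ A x σ := by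
      rw [hw]; simp only [hAne, dif_pos]; exact hAne.choose_spec
    have hwc : w x σ ∈ c := by
      refine Finset.mem_biUnion.2 ⟨x, x_s, Finset.mem_image.2 ⟨σ, ?_, rfl⟩⟩
      exact Fintype.mem_piFinset.2 hσt
    refine ⟨w x σ, hwc, ?_⟩
    rw [mem_dynEntourage]
    intro k hk
    have h1 : G^[k] (w x σ) ∈ ball (σ ⟨k, hk⟩) W := mem_iInter.1 hwA ⟨k, hk⟩
    have h2 : G^[k] y ∈ ball (σ ⟨k, hk⟩) W := mem_iInter.1 hyA ⟨k, hk⟩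
    rw [@mem_ball_symmetry _ W W_symm] at h2
    exact mem_ball_comp h2 h1
  have c_card : c.card ≤ s.card * M ^ n := by
    refine (Finset.card_biUnion_le).trans ?_
    have hx : ∀ x ∈ s,
        ((Fintype.piFinset (fun i : Fin n => t (F^[(i : ℕ)] x))).image (w x)).card ≤ M ^ n := by
      intro x _
      refine Finset.card_image_le.trans ?_
      rw [Fintype.card_piFinset]
      calc ∏ i : Fin n, (t (F^[(i : ℕ)] x)).card
          ≤ M ^ (Finset.univ : Finset (Fin n)).card :=
            Finset.prod_le_pow_card _ _ _ (fun i _ => htcard _)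
        _ = M ^ n := by rw [Finset.card_univ, Fintype.card_fin]
    calc ∑ x ∈ s, ((Fintype.piFinset (fun i : Fin n => t (F^[(i : ℕ)] x))).image (w x)).card
        ≤ s.card • (M ^ n) := Finset.sum_le_card_nsmul s _ _ hx
      _ = s.card * M ^ n := by rw [smul_eq_mul]
  calc coverMincard G Set.univ (W ○ W) n ≤ c.card := c_cover.coverMincard_le_card
    _ ≤ (s.card * M ^ n : ℕ) := by exact_mod_cast c_card
    _ = coverMincard F Set.univ U n * (M : ℕ∞) ^ n := by
        rw [← s_card]; push_cast; ring

lemma mincard_iterate_le {X : Type*} (f : X → X) (Fs : Set X) (U : Set (X × X))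
    {k : ℕ} (hk : 0 < k) (n : ℕ) :
    coverMincard (f^[k]) Fs U n ≤ coverMincard f Fs U (n * k) := by
  refine le_iInf₂ fun s hs => ?_
  refine IsDynCoverOf.coverMincard_le_card ?_
  intro y hy
  obtain ⟨x, x_s, hball⟩ := hs hy
  refine ⟨x, x_s, ?_⟩
  rw [mem_dynEntourage] at hball ⊢
  intro i hi
  rw [← Function.iterate_mul]
  have : k * i < n * k := by
    rw [mul_comm k i]
    exact Nat.mul_lt_mul_of_lt_of_le hi le_rfl hk
  exact hball (k * i) this

lemma mincard_le_iterate {Y : Type*} (g : Y → Y) (Fs : Set Y) (W : Set (Y × Y))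
    {k : ℕ} (hk : 0 < k) (n : ℕ) :
    coverMincard g Fs W (n * k) ≤ coverMincard (g^[k]) Fs (dynEntourage g W k) n := by
  refine le_iInf₂ fun s hs => ?_
  refine IsDynCoverOf.coverMincard_le_card ?_
  intro y hy
  obtain ⟨x, x_s, hball⟩ := hs hy
  refine ⟨x, x_s, ?_⟩
  rw [mem_dynEntourage] at hball ⊢
  intro l hl
  have hdiv : l / k < n := Nat.div_lt_of_lt_mul (by rwa [mul_comm] at hl)
  have h1 := hball (l / k) hdiv
  rw [mem_dynEntourage] at h1
  have h2 := h1 (l % k) (Nat.mod_lt l hk)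
  rw [← Function.iterate_mul, ← Function.iterate_add_apply, ← Function.iterate_add_apply,
    Nat.mod_add_div l k] at h2
  exact h2

lemma entropy_le_of_bounded_fibers [MetricSpace X] [CompactSpace X] [MetricSpace Y]
    [CompactSpace Y] [Nonempty X]
    {f : X → X} {g : Y → Y} {π : Y → X}
    (hg : Continuous g) (hπ : Continuous π)
    (hsurj : Function.Surjective π) (hsemi : π ∘ g = f ∘ π)
    {M : ℕ} (hM : 0 < M)
    (hfib : ∀ x : X, (π ⁻¹' {x}).Finite ∧ (π ⁻¹' {x}).ncard ≤ M)
    (hftop : coverEntropy f (Set.univ : Set X) ≠ ⊤) :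
    coverEntropy g (Set.univ : Set Y) ≤ coverEntropy f (Set.univ : Set X) := by
  have hNY : Nonempty Y := by
    obtain ⟨y, -⟩ := hsurj (Classical.arbitrary X)
    exact ⟨y⟩
  have ugc : UniformContinuous g := CompactSpace.uniformContinuous_of_continuous hg
  have hsc : Function.Semiconj π g f := fun y => congrFun hsemi y
  have hfne : (Set.univ : Set X).Nonempty := univ_nonempty
  have h0 : (0 : EReal) ≤ coverEntropy f Set.univ := coverEntropy_nonneg f hfne
  have hfbot : coverEntropy f (Set.univ : Set X) ≠ ⊥ := ne_bot_of_le_ne_bot (by simp) h0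
  set r : ℝ := (coverEntropy f (Set.univ : Set X)).toReal with hrdef
  have hr : coverEntropy f (Set.univ : Set X) = (r : EReal) :=
    (EReal.coe_toReal hftop hfbot).symm
  have hM1 : (1 : ℝ≥0∞) ≤ (M : ℝ≥0∞) := by exact_mod_cast hM
  have hlogM0 : (0 : EReal) ≤ log (M : ℝ≥0∞) := zero_le_log_iff.2 hM1
  -- main quantitative bound
  have key : ∀ ε : ℝ, 0 < ε → ∀ k : ℕ, 0 < k →
      coverEntropy g (Set.univ : Set Y) ≤ ((r + ε : ℝ) : EReal) + log (M : ℝ≥0∞) / (k : EReal) := by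
    intro ε hε k hk
    refine iSup₂_le fun V hV => ?_
    obtain ⟨W, hWu, hWsymm, hWV⟩ := comp_symm_mem_uniformity_sets hV
    have hD : dynEntourage g W k ∈ 𝓤 Y := dynEntourage_mem_uniformity ugc hWu k
    obtain ⟨W2, hW2u, hW2symm, hW2D⟩ := comp_symm_mem_uniformity_sets hD
    obtain ⟨U0, hU0u, hU0ball⟩ := fiber_cover hπ hfib hW2u
    obtain ⟨U, hUu, hUsymm, hUball⟩ : ∃ U ∈ 𝓤 X, SetRel.IsSymm U ∧ ∀ x : X, ∃ t : Finset Y,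
        t.card ≤ M ∧ π ⁻¹' (ball x U) ⊆ ⋃ y ∈ t, ball y W2 :=
      ⟨SetRel.symmetrize U0, symmetrize_mem_uniformity hU0u, inferInstance, fun x =>
        let ⟨t, ht1, ht2⟩ := hU0ball x
        ⟨t, ht1, (preimage_mono (ball_mono SetRel.symmetrize_subset_self x)).trans ht2⟩⟩
    have hsck : Function.Semiconj π (g^[k]) (f^[k]) := hsc.iterate_right k
    -- choose a good time n
    have hlt : coverEntropyEntourage f Set.univ U < ((r + ε : ℝ) : EReal) := by
      refine lt_of_le_of_lt ((coverEntropyEntourage_le_coverEntropy f Set.univ hUu).trans_eq hr) ?_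
      exact_mod_cast (by linarith : r < r + ε)
    have hev : ∀ᶠ m in atTop,
        log (coverMincard f Set.univ U m) / (m : EReal) < ((r + ε : ℝ) : EReal) := by
      have := eventually_lt_of_limsup_lt (b := ((r + ε : ℝ) : EReal))
        (u := fun m : ℕ => log (coverMincard f Set.univ U m) / (m : EReal)) (f := atTop) ?_
      · exact this
      · exact hlt
    obtain ⟨N, hN⟩ := eventually_atTop.1 hev
    set n : ℕ := max N 1 with hn
    have hn1 : 1 ≤ n := le_max_right N 1
    have hnk1 : N ≤ n * k := le_trans (le_max_left N 1) (Nat.le_mul_of_pos_right n hk)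
    have hnk_pos : 0 < n * k := Nat.mul_pos (lt_of_lt_of_le one_pos hn1) hk
    -- chain of cover estimates
    have hmc : coverMincard g Set.univ W (n * k)
        ≤ coverMincard f Set.univ U (n * k) * (M : ℕ∞) ^ n :=
      calc coverMincard g Set.univ W (n * k)
          ≤ coverMincard (g^[k]) Set.univ (dynEntourage g W k) n :=
            mincard_le_iterate g Set.univ W hk n
        _ ≤ coverMincard (g^[k]) Set.univ (W2 ○ W2) n :=
            coverMincard_antitone (g^[k]) Set.univ n hW2D
        _ ≤ coverMincard (f^[k]) Set.univ U n * (M : ℕ∞) ^ n :=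
            core_mincard hsck hW2symm hUsymm hUball hM n
        _ ≤ coverMincard f Set.univ U (n * k) * (M : ℕ∞) ^ n :=
            mul_le_mul_left (mincard_iterate_le f Set.univ U hk n) _
    -- entropy estimate for the entourage V
    have hV1 : coverEntropyEntourage g Set.univ V ≤ coverEntropyEntourage g Set.univ (W ○ W) :=
      coverEntropyEntourage_antitone g Set.univ hWV
    have hV2 : coverEntropyEntourage g Set.univ (W ○ W)
        ≤ log (coverMincard g Set.univ W (n * k)) / ((n * k : ℕ) : EReal) :=
      by haveI := hWsymm
         exact coverEntropyEntourage_le_log_coverMincard_div (mapsTo_univ g Set.univ) hnk_pos.ne'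
    have hlog : log (coverMincard g Set.univ W (n * k))
        ≤ log (coverMincard f Set.univ U (n * k)) + (n : EReal) * log (M : ℝ≥0∞) := by
      have h1 : ((coverMincard g Set.univ W (n * k) : ℕ∞) : ℝ≥0∞)
          ≤ ((coverMincard f Set.univ U (n * k) * (M : ℕ∞) ^ n : ℕ∞) : ℝ≥0∞) :=
        ENat.toENNReal_le.2 hmc
      calc log (coverMincard g Set.univ W (n * k)) ≤ _ := log_monotone h1
        _ = log (coverMincard f Set.univ U (n * k)) + (n : EReal) * log (M : ℝ≥0∞) := by
            rw [ENat.toENNReal_mul, ENat.toENNReal_pow, ENat.toENNReal_coe, log_mul_add, log_pow]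
    have ha : (0 : EReal) ≤ log (coverMincard f Set.univ U (n * k)) :=
      zero_le_log_iff.2 (by exact_mod_cast (one_le_coverMincard_iff f Set.univ U (n * k)).2 hfne)
    have hb : (0 : EReal) ≤ (n : EReal) * log (M : ℝ≥0∞) :=
      mul_nonneg (Nat.cast_nonneg' n) hlogM0
    have hdiv : log (coverMincard g Set.univ W (n * k)) / ((n * k : ℕ) : EReal)
        ≤ log (coverMincard f Set.univ U (n * k)) / ((n * k : ℕ) : EReal)
          + ((n : EReal) * log (M : ℝ≥0∞)) / ((n * k : ℕ) : EReal) := by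
      rw [← div_right_distrib_of_nonneg ha hb]
      exact monotone_div_right_of_nonneg (Nat.cast_nonneg' (n * k)) hlog
    have hterm2 : ((n : EReal) * log (M : ℝ≥0∞)) / ((n * k : ℕ) : EReal)
        = log (M : ℝ≥0∞) / (k : EReal) := by
      have hne0 : (n : EReal) ≠ 0 := by
        exact_mod_cast (Nat.one_le_iff_ne_zero.1 hn1 : n ≠ 0)
      have hcast : ((n * k : ℕ) : EReal) = (n : EReal) * (k : EReal) := by norm_cast
      rw [hcast, mul_comm (n : EReal) (log (M : ℝ≥0∞)), ← EReal.div_div, ← EReal.mul_div,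
        EReal.div_self (natCast_ne_bot n) (natCast_ne_top n) hne0, mul_one]
    have hterm1 : log (coverMincard f Set.univ U (n * k)) / ((n * k : ℕ) : EReal)
        ≤ ((r + ε : ℝ) : EReal) := (hN (n * k) hnk1).le
    calc coverEntropyEntourage g Set.univ V
        ≤ log (coverMincard g Set.univ W (n * k)) / ((n * k : ℕ) : EReal) := hV1.trans hV2
      _ ≤ _ := hdiv
      _ ≤ ((r + ε : ℝ) : EReal) + log (M : ℝ≥0∞) / (k : EReal) := by
          rw [hterm2]; exact add_le_add_left hterm1 _
  -- conclusion
  rw [hr]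
  by_contra hcon
  push_neg at hcon
  obtain ⟨c, hc1, hc2⟩ := EReal.exists_between_coe_real hcon
  set ε : ℝ := (c - r) / 3 with hεdef
  have hrc : r < c := by exact_mod_cast hc1
  have hε : 0 < ε := by rw [hεdef]; linarith
  set k : ℕ := ⌈Real.log M / ε⌉₊ + 1 with hkdef
  have hk : 0 < k := Nat.succ_pos _
  have hlogMr : log (M : ℝ≥0∞) = ((Real.log M : ℝ) : EReal) := by
    rw [log_pos_real' (by simp [Nat.cast_pos.2 hM] : (0:ℝ) < (M : ℝ≥0∞).toReal)]
    simp
  have hdivk : log (M : ℝ≥0∞) / (k : EReal) ≤ (ε : EReal) := by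
    rw [hlogMr]
    rw [EReal.div_le_iff_le_mul (by exact_mod_cast hk) (natCast_ne_top k)]
    have : Real.log M ≤ k * ε := by
      have h1 : Real.log M / ε ≤ k := by
        calc Real.log M / ε ≤ ⌈Real.log M / ε⌉₊ := Nat.le_ceil _
          _ ≤ k := by exact_mod_cast Nat.le_succ _
      calc Real.log M = Real.log M / ε * ε := by field_simp
        _ ≤ k * ε := mul_le_mul_of_nonneg_right h1 hε.le
    calc ((Real.log M : ℝ) : EReal) ≤ ((k * ε : ℝ) : EReal) := EReal.coe_le_coe_iff.2 this
      _ = (k : EReal) * (ε : EReal) := by norm_cast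
  have := (key ε hε k hk).trans (add_le_add_right hdivk _)
  have hfin : coverEntropy g (Set.univ : Set Y) ≤ ((r + ε + ε : ℝ) : EReal) := by
    refine this.trans_eq ?_
    norm_cast
  have : (c : EReal) ≤ ((r + ε + ε : ℝ) : EReal) := hc2.le.trans hfin
  have : c ≤ r + ε + ε := by exact_mod_cast this
  rw [hεdef] at this
  linarith

end DouadyAux

/-- Proposition 2.4 (Douady): if `π : Y → X` is a continuous surjective semi-conjugacy
from `(Y, g)` to `(X, f)` between compact metric spaces, then `h_top(f) ≤ h_top(g)`;
if moreover the fibers of `π` have uniformly bounded (finite) cardinality, then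
`h_top(f) = h_top(g)`. -/
theorem coverEntropy_le_of_semiconj_and_eq_of_finite_fibers
    {X Y : Type*} [MetricSpace X] [CompactSpace X] [MetricSpace Y] [CompactSpace Y]
    (f : X → X) (g : Y → Y) (π : Y → X)
    (hf : Continuous f) (hg : Continuous g) (hπ : Continuous π)
    (hsurj : Function.Surjective π) (hsemi : π ∘ g = f ∘ π) :
    coverEntropy f (Set.univ : Set X) ≤ coverEntropy g (Set.univ : Set Y) ∧
      (∀ M : ℕ, (∀ x : X, (π ⁻¹' {x}).Finite ∧ (π ⁻¹' {x}).ncard ≤ M) →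
        coverEntropy f (Set.univ : Set X) = coverEntropy g (Set.univ : Set Y)) := by
  have hsc : Function.Semiconj π g f := fun y => congrFun hsemi y
  have part1 : coverEntropy f (Set.univ : Set X) ≤ coverEntropy g (Set.univ : Set Y) := by
    have h' : UniformContinuous π := CompactSpace.uniformContinuous_of_continuous hπ
    have h := coverEntropy_image_le_of_uniformContinuous hsc h' Set.univ
    rwa [Set.image_univ, hsurj.range_eq] at h
  refine ⟨part1, fun M hfib => ?_⟩
  rcases isEmpty_or_nonempty X with hX | hX
  · have hY : IsEmpty Y := ⟨fun y => IsEmpty.false (π y)⟩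
    rw [Set.univ_eq_empty_iff.2 hX, Set.univ_eq_empty_iff.2 hY, coverEntropy_empty,
      coverEntropy_empty]
  · have hM : 0 < M := by
      obtain ⟨y, hy⟩ := hsurj (Classical.arbitrary X)
      have hfx := hfib (Classical.arbitrary X)
      exact lt_of_lt_of_le ((Set.ncard_pos hfx.1).2 ⟨y, hy⟩) hfx.2
    refine le_antisymm part1 ?_
    by_cases hftop : coverEntropy f (Set.univ : Set X) = ⊤
    · rw [hftop]; exact le_top
    · exact DouadyAux.entropy_le_of_bounded_fibers hg hπ hsurj hsemi hM hfib hftop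
end

section
/- Let X be a compact metric space, f : X → X continuous, p ≥ 1 an integer, and K₀, …, K_{p−1} nonempty compact subsets of X such that f(K_i) = K_{i+1 (mod p)} for all i (so f maps each K_i onto the next one). Assume there is M ∈ ℕ such that for every i and every y ∈ X, the set {x ∈ K_i : f(x) = y} has at most M elements. Then the topological entropies of f^[p] on K_i are equal for all i, and the topological entropy of f on K₀ ∪ … ∪ K_{p−1} equals (1/p) times the topological entropy of f^[p] on K₀. -/
open Dynamics


namespace CycleEntropyAux

open Set Uniformity UniformSpace ENNReal Filter Function

variable {X : Type*}

lemma dynEntourage_iterate (f : X → X) (U : Set (X × X)) (p n : ℕ) :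
    dynEntourage (f^[p]) (dynEntourage f U p) n = dynEntourage f U (p * n) := by
  ext ⟨x, y⟩
  simp only [mem_dynEntourage]
  constructor
  · intro h j hj
    have hp : 0 < p := by
      rcases Nat.eq_zero_or_pos p with rfl | hp
      · simp at hj
      · exact hp
    have hk : j / p < n := Nat.div_lt_of_lt_mul hj
    have h2 := h (j / p) hk (j % p) (Nat.mod_lt j hp)
    rw [← Function.iterate_mul, ← Function.iterate_add_apply,
      ← Function.iterate_add_apply, Nat.mod_add_div j p] at h2
    exact h2
  · intro h k hk r hr
    have hlt : r + p * k < p * n := by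
      calc r + p * k < p + p * k := by omega
        _ = p * (k + 1) := by ring
        _ ≤ p * n := Nat.mul_le_mul_left p hk
    have := h (r + p * k) hlt
    rwa [Function.iterate_add_apply, Function.iterate_add_apply, Function.iterate_mul] at this

lemma coverMincard_iterate (f : X → X) (F : Set X) (U : Set (X × X)) (p n : ℕ) :
    coverMincard (f^[p]) F (dynEntourage f U p) n = coverMincard f F U (p * n) := by
  simp only [coverMincard, IsDynCoverOf, dynEntourage_iterate]

lemma dynEntourage_mul_subset (f : X → X) (U : Set (X × X)) {p : ℕ} (hp : 0 < p) (n : ℕ) :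
    dynEntourage f U (p * n) ⊆ dynEntourage (f^[p]) U n := by
  rintro ⟨x, y⟩ h
  rw [mem_dynEntourage] at h ⊢
  intro k hk
  rw [← Function.iterate_mul]
  exact h (p * k) (Nat.mul_lt_mul_of_pos_left hk hp)

lemma coverMincard_iterate_le (f : X → X) (F : Set X) (U : Set (X × X)) {p : ℕ} (hp : 0 < p)
    (n : ℕ) : coverMincard (f^[p]) F U n ≤ coverMincard f F U (p * n) := by
  refine le_iInf₂ fun s hs => ?_
  refine IsDynCoverOf.coverMincard_le_card ?_
  exact SetRel.IsCover.mono_entourage (dynEntourage_mul_subset f U hp n) hs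

lemma coverMincard_mono_set (T : X → X) {F G : Set X} (h : F ⊆ G) (U : Set (X × X)) (n : ℕ) :
    coverMincard T F U n ≤ coverMincard T G U n :=
  le_iInf₂ fun s hs => IsDynCoverOf.coverMincard_le_card (h.trans hs)

lemma coverEntropyEntourage_mono_set (T : X → X) {F G : Set X} (h : F ⊆ G) (U : Set (X × X)) :
    coverEntropyEntourage T F U ≤ coverEntropyEntourage T G U := by
  refine limsup_le_limsup (Eventually.of_forall fun n => ?_)
  exact EReal.monotone_div_right_of_nonneg (Nat.cast_nonneg' n)
    (log_monotone (ENat.toENNReal_le.2 (coverMincard_mono_set T h U n)))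

lemma coverEntropy_mono_set [UniformSpace X] (T : X → X) {F G : Set X} (h : F ⊆ G) :
    coverEntropy T F ≤ coverEntropy T G :=
  iSup₂_mono fun U _ => coverEntropyEntourage_mono_set T h U

lemma coverMincard_union_le (T : X → X) (F G : Set X) (U : Set (X × X)) (n : ℕ) :
    coverMincard T (F ∪ G) U n ≤ coverMincard T F U n + coverMincard T G U n := by
  classical
  rcases eq_top_or_lt_top (coverMincard T F U n) with hF | hF
  · rw [hF, top_add]; exact le_top
  rcases eq_top_or_lt_top (coverMincard T G U n) with hG | hG
  · rw [hG, add_top]; exact le_top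
  obtain ⟨s, hs, hs'⟩ := (coverMincard_finite_iff T F U n).1 hF
  obtain ⟨t, ht, ht'⟩ := (coverMincard_finite_iff T G U n).1 hG
  have hcov : IsDynCoverOf T (F ∪ G) U n (↑(s ∪ t) : Set X) := by
    simp only [IsDynCoverOf, Finset.coe_union, biUnion_union]
    exact SetRel.IsCover.union hs ht
  calc coverMincard T (F ∪ G) U n ≤ ((s ∪ t).card : ℕ∞) := hcov.coverMincard_le_card
    _ ≤ ((s.card + t.card : ℕ) : ℕ∞) := Nat.cast_le.2 (Finset.card_union_le s t)
    _ = (s.card : ℕ∞) + (t.card : ℕ∞) := by rw [Nat.cast_add]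
    _ = coverMincard T F U n + coverMincard T G U n := by rw [hs', ht']

lemma coverEntropyEntourage_union_le (T : X → X) (F G : Set X) (U : Set (X × X)) :
    coverEntropyEntourage T (F ∪ G) U
      ≤ max (coverEntropyEntourage T F U) (coverEntropyEntourage T G U) := by
  rcases F.eq_empty_or_nonempty with rfl | hF
  · rw [empty_union]; exact le_max_right _ _
  rcases G.eq_empty_or_nonempty with rfl | hG
  · rw [union_empty]; exact le_max_left _ _
  have h2pos : (0:EReal) ≤ log (2 : ℝ≥0∞) := zero_le_log_iff.2 one_le_two
  have key : (fun n : ℕ => log (coverMincard T (F ∪ G) U n) / (n : ℕ)) ≤ᶠ[atTop]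
      (fun n : ℕ => log (2 : ℝ≥0∞) / (n : ℕ)) + (fun n : ℕ =>
        max (log (coverMincard T F U n) / (n : ℕ)) (log (coverMincard T G U n) / (n : ℕ))) := by
    refine Eventually.of_forall fun n => ?_
    have hmax0 : (0:EReal) ≤ max (log (coverMincard T F U n)) (log (coverMincard T G U n)) :=
      le_max_of_le_left (zero_le_log_iff.2 (by
        have := ENat.toENNReal_le.2 ((one_le_coverMincard_iff T F U n).2 hF)
        rwa [ENat.toENNReal_one] at this))
    have h1 : log (coverMincard T (F ∪ G) U n)
        ≤ log (2 : ℝ≥0∞) + max (log (coverMincard T F U n)) (log (coverMincard T G U n)) := by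
      have hm : ((coverMincard T (F ∪ G) U n : ℕ∞) : ℝ≥0∞)
          ≤ 2 * max ((coverMincard T F U n : ℕ∞) : ℝ≥0∞) ((coverMincard T G U n : ℕ∞) : ℝ≥0∞) := by
        calc ((coverMincard T (F ∪ G) U n : ℕ∞) : ℝ≥0∞)
            ≤ ((coverMincard T F U n + coverMincard T G U n : ℕ∞) : ℝ≥0∞) :=
              ENat.toENNReal_le.2 (coverMincard_union_le T F G U n)
          _ = ((coverMincard T F U n : ℕ∞) : ℝ≥0∞) + ((coverMincard T G U n : ℕ∞) : ℝ≥0∞) :=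
              ENat.toENNReal_add _ _
          _ ≤ max ((coverMincard T F U n : ℕ∞) : ℝ≥0∞) ((coverMincard T G U n : ℕ∞) : ℝ≥0∞)
              + max ((coverMincard T F U n : ℕ∞) : ℝ≥0∞) ((coverMincard T G U n : ℕ∞) : ℝ≥0∞) :=
              add_le_add (le_max_left _ _) (le_max_right _ _)
          _ = 2 * max ((coverMincard T F U n : ℕ∞) : ℝ≥0∞) ((coverMincard T G U n : ℕ∞) : ℝ≥0∞) :=
              (two_mul _).symm
      calc log (coverMincard T (F ∪ G) U n)
          ≤ log (2 * max ((coverMincard T F U n : ℕ∞) : ℝ≥0∞)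
              ((coverMincard T G U n : ℕ∞) : ℝ≥0∞)) := log_monotone hm
        _ = log 2 + log (max ((coverMincard T F U n : ℕ∞) : ℝ≥0∞)
              ((coverMincard T G U n : ℕ∞) : ℝ≥0∞)) := log_mul_add
        _ = log 2 + max (log (coverMincard T F U n)) (log (coverMincard T G U n)) := by
              rw [log_monotone.map_max]
    calc log (coverMincard T (F ∪ G) U n) / (n:ℕ)
        ≤ (log 2 + max (log (coverMincard T F U n)) (log (coverMincard T G U n))) / (n:ℕ) :=
          EReal.monotone_div_right_of_nonneg (Nat.cast_nonneg' n) h1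
      _ = log 2 / (n:ℕ) + (max (log (coverMincard T F U n)) (log (coverMincard T G U n))) / (n:ℕ) :=
          EReal.div_right_distrib_of_nonneg h2pos hmax0
      _ = log 2 / (n:ℕ) + max (log (coverMincard T F U n) / (n:ℕ))
            (log (coverMincard T G U n) / (n:ℕ)) := by
          rw [(EReal.monotone_div_right_of_nonneg (Nat.cast_nonneg' (α := EReal) n)).map_max]
  have hlimu : atTop.limsup (fun n : ℕ => log (2:ℝ≥0∞) / (n:ℕ)) = 0 :=
    Tendsto.limsup_eq (EReal.tendsto_const_div_atTop_nhds_zero_nat (by simp) (by simp))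
  refine (limsup_le_limsup key).trans ?_
  refine (EReal.limsup_add_le (Or.inl (hlimu ▸ EReal.zero_ne_bot))
    (Or.inl (hlimu ▸ EReal.zero_ne_top))).trans ?_
  rw [hlimu, zero_add, limsup_max]
  exact le_refl _

lemma coverEntropy_union [UniformSpace X] (T : X → X) (F G : Set X) :
    coverEntropy T (F ∪ G) = max (coverEntropy T F) (coverEntropy T G) := by
  apply le_antisymm
  · refine iSup₂_le fun U hU => (coverEntropyEntourage_union_le T F G U).trans
      (max_le_max (coverEntropyEntourage_le_coverEntropy T F hU)
        (coverEntropyEntourage_le_coverEntropy T G hU))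
  · exact max_le (coverEntropy_mono_set T subset_union_left)
      (coverEntropy_mono_set T subset_union_right)

lemma natCast_mul_ereal (p n : ℕ) : ((p * n : ℕ) : EReal) = (p : EReal) * (n : EReal) := by
  rw [← EReal.coe_coe_eq_natCast, ← EReal.coe_coe_eq_natCast, ← EReal.coe_coe_eq_natCast,
    Nat.cast_mul, EReal.coe_mul]

lemma coverEntropy_le_iterate_div [UniformSpace X] {f : X → X} {F : Set X} {p : ℕ} (hp : 0 < p)
    (hUC : UniformContinuous f) (hinv : MapsTo f F F) :
    coverEntropy f F ≤ coverEntropy (f^[p]) F / (p : EReal) := by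
  have hp' : (0:EReal) < (p:ℕ) := Nat.cast_pos'.2 hp
  have hpt : ((p:ℕ) : EReal) ≠ ⊤ := EReal.natCast_ne_top p
  refine iSup₂_le fun U hU => ?_
  obtain ⟨V, hV, hVsymm, hVU⟩ := comp_symm_mem_uniformity_sets hU
  have hW : dynEntourage f V p ∈ 𝓤 X := dynEntourage_mem_uniformity hUC hV p
  set c := coverEntropyEntourage f F U with hc
  have hkey : ∀ n : ℕ, 1 ≤ n →
      c * (p:ℕ) ≤ log (coverMincard (f^[p]) F (dynEntourage f V p) n) / (n:ℕ) := by
    intro n hn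
    have h0 : c ≤ log (coverMincard f F V (p*n)) / ((p*n : ℕ) : EReal) :=
      (coverEntropyEntourage_antitone f F hVU).trans
        (coverEntropyEntourage_le_log_coverMincard_div hinv (Nat.mul_pos hp hn).ne')
    rw [← coverMincard_iterate] at h0
    have hn' : (0:EReal) < (n:ℕ) := Nat.cast_pos'.2 hn
    rw [EReal.le_div_iff_mul_le hn' (EReal.natCast_ne_top n)]
    rw [EReal.le_div_iff_mul_le (by exact_mod_cast Nat.mul_pos hp hn)
      (EReal.natCast_ne_top _)] at h0
    calc c * (p:ℕ) * (n:ℕ) = c * ((p*n : ℕ) : EReal) := by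
          rw [natCast_mul_ereal, mul_assoc]
      _ ≤ _ := h0
  have hfreq : ∃ᶠ n in atTop, c * (p:ℕ) ≤
      log (coverMincard (f^[p]) F (dynEntourage f V p) n) / (n:ℕ) :=
    (eventually_atTop.2 ⟨1, hkey⟩).frequently
  have hle : c * (p:ℕ) ≤ coverEntropyEntourage (f^[p]) F (dynEntourage f V p) :=
    le_limsup_of_frequently_le hfreq
  exact (EReal.le_div_iff_mul_le hp' hpt).2
    (hle.trans (coverEntropyEntourage_le_coverEntropy (f^[p]) F hW))

lemma iterate_div_le_coverEntropy [UniformSpace X] {f : X → X} {F : Set X} {p : ℕ} (hp : 0 < p)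
    (hinv : MapsTo f F F) :
    coverEntropy (f^[p]) F / (p : EReal) ≤ coverEntropy f F := by
  have hp' : (0:EReal) < (p:ℕ) := Nat.cast_pos'.2 hp
  have hpt : ((p:ℕ) : EReal) ≠ ⊤ := EReal.natCast_ne_top p
  rw [EReal.div_le_iff_le_mul hp' hpt]
  refine iSup₂_le fun U hU => ?_
  obtain ⟨V, hV, hVsymm, hVU⟩ := comp_symm_mem_uniformity_sets hU
  rw [← EReal.div_le_iff_le_mul hp' hpt]
  have hinv' : MapsTo (f^[p]) F F := hinv.iterate p
  set c := coverEntropyEntourage (f^[p]) F U with hc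
  have hkey : ∀ n : ℕ, 1 ≤ n →
      c / (p:ℕ) ≤ log (coverMincard f F V (p*n)) / ((p*n : ℕ) : EReal) := by
    intro n hn
    have h0 : c ≤ log (coverMincard (f^[p]) F V n) / (n:ℕ) :=
      (coverEntropyEntourage_antitone (f^[p]) F hVU).trans
        (coverEntropyEntourage_le_log_coverMincard_div hinv' (Nat.one_le_iff_ne_zero.1 hn))
    have h1 : c ≤ log (coverMincard f F V (p*n)) / (n:ℕ) :=
      h0.trans (EReal.monotone_div_right_of_nonneg (Nat.cast_nonneg' n)
        (log_monotone (ENat.toENNReal_le.2 (coverMincard_iterate_le f F V hp n))))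
    have h2 := EReal.monotone_div_right_of_nonneg (le_of_lt hp') h1
    dsimp only at h2
    rw [EReal.div_div] at h2
    rwa [natCast_mul_ereal, mul_comm (p : EReal) (n : EReal)]
  have hfreq : ∃ᶠ m in atTop, c / (p:ℕ) ≤ log (coverMincard f F V m) / (m:ℕ) := by
    refine frequently_atTop.2 fun a => ⟨p * max a 1, ?_, hkey (max a 1) (le_max_right a 1)⟩
    calc a ≤ max a 1 := le_max_left a 1
      _ ≤ p * max a 1 := Nat.le_mul_of_pos_left _ hp
  have hle : c / (p:ℕ) ≤ coverEntropyEntourage f F V := le_limsup_of_frequently_le hfreq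
  exact hle.trans (coverEntropyEntourage_le_coverEntropy f F hV)

end CycleEntropyAux

open CycleEntropyAux Set Function in
/-- Lemma 7.3 (abstract form): if `f` maps each nonempty compact set `K i` onto
`K ((i+1) % p)` with uniformly finite fibers, then the entropies of `f^[p]` on the `K i`
all agree, and the entropy of `f` on the union is `(1/p)` times the entropy of `f^[p]`
on `K 0`. -/
theorem coverEntropy_cycle_of_compacta_onto
    {X : Type*} [MetricSpace X] [CompactSpace X]
    (f : X → X) (hf : Continuous f)
    (p : ℕ) (hp : 1 ≤ p) (K : ℕ → Set X)
    (hKne : ∀ i < p, (K i).Nonempty) (hKcomp : ∀ i < p, IsCompact (K i))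
    (hKmap : ∀ i < p, f '' K i = K ((i + 1) % p))
    (M : ℕ)
    (hfib : ∀ i < p, ∀ y : X,
      ({x ∈ K i | f x = y}).Finite ∧ ({x ∈ K i | f x = y}).ncard ≤ M) :
    (∀ i < p, ∀ j < p, coverEntropy (f^[p]) (K i) = coverEntropy (f^[p]) (K j)) ∧
      coverEntropy f (⋃ i < p, K i)
        = (1 / (p : EReal)) * coverEntropy (f^[p]) (K 0) := by
  have hp0 : 0 < p := hp
  have hfUC : UniformContinuous f := CompactSpace.uniformContinuous_of_continuous hf
  have hsc : Function.Semiconj f (f^[p]) (f^[p]) :=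
    Function.Commute.iterate_right (Function.Commute.refl f) p
  set g : ℕ → EReal := fun i => coverEntropy (f^[p]) (K (i % p)) with hg
  have hstep : ∀ i, g (i + 1) ≤ g i := by
    intro i
    have him : i % p < p := Nat.mod_lt i hp0
    have hmod : (i + 1) % p = (i % p + 1) % p := by
      rw [Nat.add_mod, Nat.add_mod (i % p) 1 p, Nat.mod_mod_of_dvd i (dvd_refl p)]
    have : coverEntropy (f^[p]) (f '' K (i % p)) ≤ coverEntropy (f^[p]) (K (i % p)) :=
      coverEntropy_image_le_of_uniformContinuous hsc hfUC (K (i % p))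
    rw [hKmap (i % p) him] at this
    simpa only [hg, hmod] using this
  have hanti : ∀ a b : ℕ, a ≤ b → g b ≤ g a := by
    intro a b hab
    induction b, hab using Nat.le_induction with
    | base => exact le_refl _
    | succ n hn ih => exact (hstep n).trans ih
  have hall : ∀ i j : ℕ, g i ≤ g j := by
    intro i j
    have hper : g (i + j * p) = g i := by
      simp only [hg, Nat.add_mul_mod_self_right]
    calc g i = g (i + j * p) := hper.symm
      _ ≤ g j := hanti j (i + j * p)
          (le_trans (Nat.le_mul_of_pos_left j hp0) (by rw [mul_comm]; exact Nat.le_add_left _ _))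
  have hEqK : ∀ i < p, ∀ j < p, coverEntropy (f^[p]) (K i) = coverEntropy (f^[p]) (K j) := by
    intro i hi j hj
    have := le_antisymm (hall i j) (hall j i)
    simpa only [hg, Nat.mod_eq_of_lt hi, Nat.mod_eq_of_lt hj] using this
  refine ⟨hEqK, ?_⟩
  set S : Set X := ⋃ i < p, K i with hS
  have hSinv : MapsTo f S S := by
    rintro x hx
    simp only [hS, mem_iUnion] at hx ⊢
    obtain ⟨i, hi, hxi⟩ := hx
    exact ⟨(i + 1) % p, Nat.mod_lt _ hp0, (hKmap i hi) ▸ mem_image_of_mem f hxi⟩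
  have hUle : ∀ m, m ≤ p → coverEntropy (f^[p]) (⋃ i < m, K i) ≤ coverEntropy (f^[p]) (K 0) := by
    intro m
    induction m with
    | zero =>
      intro _
      simp only [Nat.not_lt_zero, iUnion_of_empty, iUnion_empty]
      rw [coverEntropy_empty]
      exact bot_le
    | succ m ih =>
      intro hm
      rw [Set.biUnion_lt_succ, CycleEntropyAux.coverEntropy_union]
      exact max_le (ih (Nat.le_of_succ_le hm)) (le_of_eq (hEqK m hm 0 hp0))
  have hUeq : coverEntropy (f^[p]) S = coverEntropy (f^[p]) (K 0) := by
    refine le_antisymm (hUle p le_rfl) (coverEntropy_mono_set (f^[p]) ?_)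
    exact subset_iUnion₂ (s := fun i (_ : i < p) => K i) 0 hp0
  have hmain : coverEntropy f S = coverEntropy (f^[p]) (K 0) / (p : EReal) := by
    rw [← hUeq]
    exact le_antisymm (coverEntropy_le_iterate_div hp0 hfUC hSinv)
      (iterate_div_le_coverEntropy hp0 hSinv)
  rw [hmain, EReal.div_eq_inv_mul, EReal.div_eq_inv_mul, mul_one]
end

section
/- Let X be a compact metric space, f : X → X continuous, k ≥ 1 an integer, K₁, …, K_k nonempty compact subsets of X, and σ : {1,…,k} → {1,…,k} a function such that f(K_i) ⊆ K_{σ(i)} for every i. Call an index i periodic if σ^[p](i) = i for some p ≥ 1, and let p_i denote the least such p. Then the topological entropy of f on K₁ ∪ … ∪ K_k equals the maximum, over all periodic indices i, of (1/p_i) times the topological entropy of f^[p_i] on K_i. -/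
open Dynamics Set Uniformity UniformSpace Filter ENNReal EReal

namespace CoreEntropyAux



/-- Multiplication by a positive real as an order isomorphism of `EReal`. -/
noncomputable def mulIso (c : ℝ) (hc : 0 < c) : EReal ≃o EReal where
  toFun x := (c : EReal) * x
  invFun x := ((c⁻¹ : ℝ) : EReal) * x
  left_inv x := by
    show ((c⁻¹ : ℝ) : EReal) * ((c : EReal) * x) = x
    induction x with
    | bot =>
        rw [EReal.mul_bot_of_pos (by exact_mod_cast hc), EReal.mul_bot_of_pos]
        exact_mod_cast inv_pos.2 hc
    | coe x => rw [← EReal.coe_mul, ← EReal.coe_mul, inv_mul_cancel_left₀ hc.ne']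
    | top =>
        rw [EReal.mul_top_of_pos (by exact_mod_cast hc), EReal.mul_top_of_pos]
        exact_mod_cast inv_pos.2 hc
  right_inv x := by
    show ((c : ℝ) : EReal) * (((c⁻¹ : ℝ) : EReal) * x) = x
    induction x with
    | bot =>
        rw [EReal.mul_bot_of_pos (by exact_mod_cast inv_pos.2 hc), EReal.mul_bot_of_pos]
        exact_mod_cast hc
    | coe x => rw [← EReal.coe_mul, ← EReal.coe_mul, mul_inv_cancel_left₀ hc.ne']
    | top =>
        rw [EReal.mul_top_of_pos (by exact_mod_cast inv_pos.2 hc), EReal.mul_top_of_pos]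
        exact_mod_cast hc
  map_rel_iff' := by
    intro x y
    show (c : EReal) * x ≤ (c : EReal) * y ↔ x ≤ y
    constructor
    · intro h
      have h2 := mul_le_mul_of_nonneg_left h (le_of_lt (by exact_mod_cast inv_pos.2 hc :
        (0 : EReal) < ((c⁻¹ : ℝ) : EReal)))
      rwa [← mul_assoc, ← EReal.coe_mul, inv_mul_cancel₀ hc.ne', EReal.coe_one, one_mul,
        ← mul_assoc, ← EReal.coe_mul, inv_mul_cancel₀ hc.ne', EReal.coe_one, one_mul] at h2
    · intro h
      exact mul_le_mul_of_nonneg_left h (le_of_lt (by exact_mod_cast hc))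

lemma mulIso_apply (c : ℝ) (hc : 0 < c) (x : EReal) : mulIso c hc x = (c : EReal) * x := rfl

lemma limsup_const_mul {α : Type*} {f : Filter α} (u : α → EReal) (c : ℝ) (hc : 0 < c) :
    limsup (fun x ↦ (c : EReal) * u x) f = (c : EReal) * limsup u f :=
  ((mulIso c hc).limsup_apply (u := u)).symm

lemma liminf_const_mul {α : Type*} {f : Filter α} (u : α → EReal) (c : ℝ) (hc : 0 < c) :
    liminf (fun x ↦ (c : EReal) * u x) f = (c : EReal) * liminf u f :=
  ((mulIso c hc).liminf_apply (u := u)).symm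

lemma mul_le_mul_left'' {x y : EReal} (h : x ≤ y) (c : ℝ) (hc : 0 < c) :
    (c : EReal) * x ≤ (c : EReal) * y := (mulIso c hc).monotone h

lemma const_mul_iSup {ι : Sort*} (u : ι → EReal) (c : ℝ) (hc : 0 < c) :
    (c : EReal) * (⨆ i, u i) = ⨆ i, (c : EReal) * u i :=
  (mulIso c hc).map_iSup u

variable {X : Type*}

lemma coverMincard_mono_set (T : X → X) {F G : Set X} (h : F ⊆ G) (U : Set (X × X)) (n : ℕ) :
    coverMincard T F U n ≤ coverMincard T G U n :=
  le_iInf₂ fun s hs ↦ iInf₂_le s (h.trans hs)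

lemma coverEntropyEntourage_mono_set (T : X → X) {F G : Set X} (h : F ⊆ G) (U : Set (X × X)) :
    coverEntropyEntourage T F U ≤ coverEntropyEntourage T G U :=
  limsup_le_limsup (Eventually.of_forall fun n ↦
    monotone_div_right_of_nonneg (Nat.cast_nonneg' n)
      (log_monotone (ENat.toENNReal_mono (coverMincard_mono_set T h U n))))

lemma coverEntropyInfEntourage_mono_set (T : X → X) {F G : Set X} (h : F ⊆ G) (U : Set (X × X)) :
    coverEntropyInfEntourage T F U ≤ coverEntropyInfEntourage T G U :=
  liminf_le_liminf (Eventually.of_forall fun n ↦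
    monotone_div_right_of_nonneg (Nat.cast_nonneg' n)
      (log_monotone (ENat.toENNReal_mono (coverMincard_mono_set T h U n))))

lemma coverEntropy_mono_set [UniformSpace X] (T : X → X) {F G : Set X} (h : F ⊆ G) :
    coverEntropy T F ≤ coverEntropy T G :=
  iSup₂_mono fun U _ ↦ coverEntropyEntourage_mono_set T h U

lemma coverEntropyInf_mono_set [UniformSpace X] (T : X → X) {F G : Set X} (h : F ⊆ G) :
    coverEntropyInf T F ≤ coverEntropyInf T G :=
  iSup₂_mono fun U _ ↦ coverEntropyInfEntourage_mono_set T h U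



lemma coverMincard_union_le (T : X → X) (F G : Set X) (U : Set (X × X)) (n : ℕ) :
    coverMincard T (F ∪ G) U n ≤ coverMincard T F U n + coverMincard T G U n := by
  classical
  rcases eq_top_or_lt_top (coverMincard T F U n) with hF | hF
  · rw [hF, top_add]; exact le_top
  rcases eq_top_or_lt_top (coverMincard T G U n) with hG | hG
  · rw [hG, add_top]; exact le_top
  obtain ⟨s, hs, hscard⟩ := (coverMincard_finite_iff T F U n).1 hF
  obtain ⟨t, ht, htcard⟩ := (coverMincard_finite_iff T G U n).1 hG
  have hcover : IsDynCoverOf T (F ∪ G) U n (s ∪ t : Finset X) := by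
    rw [Finset.coe_union]
    intro x hx
    rcases hx with hx | hx
    · obtain ⟨y, hy, hxy⟩ := hs hx
      exact ⟨y, Or.inl hy, hxy⟩
    · obtain ⟨y, hy, hxy⟩ := ht hx
      exact ⟨y, Or.inr hy, hxy⟩
  refine hcover.coverMincard_le_card.trans ?_
  rw [← hscard, ← htcard]
  exact_mod_cast Finset.card_union_le s t

lemma log_coverMincard_nonneg (T : X → X) {F : Set X} (h : F.Nonempty) (U : Set (X × X))
    (n : ℕ) : 0 ≤ log (coverMincard T F U n : ℝ≥0∞) := by
  rw [zero_le_log_iff]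
  exact le_trans (by simp) (ENat.toENNReal_mono ((one_le_coverMincard_iff T F U n).2 h))

lemma coverEntropyEntourage_union_le (T : X → X) (F G : Set X) (U : Set (X × X)) :
    coverEntropyEntourage T (F ∪ G) U
      ≤ max (coverEntropyEntourage T F U) (coverEntropyEntourage T G U) := by
  rcases F.eq_empty_or_nonempty with rfl | hF
  · rw [empty_union]; exact le_max_right _ _
  rcases G.eq_empty_or_nonempty with rfl | hG
  · rw [union_empty]; exact le_max_left _ _
  have key : ∀ n : ℕ, log (coverMincard T (F ∪ G) U n) / (n : EReal)
      ≤ log 2 / (n : EReal)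
        + max (log (coverMincard T F U n) / (n : EReal))
            (log (coverMincard T G U n) / (n : EReal)) := by
    intro n
    have h1 : (coverMincard T (F ∪ G) U n : ℝ≥0∞)
        ≤ 2 * max (coverMincard T F U n : ℝ≥0∞) (coverMincard T G U n : ℝ≥0∞) := by
      rw [two_mul]
      refine le_trans (ENat.toENNReal_mono (coverMincard_union_le T F G U n)) ?_
      rw [ENat.toENNReal_add]
      exact add_le_add (le_max_left _ _) (le_max_right _ _)
    have h2 : log (coverMincard T (F ∪ G) U n)
        ≤ log 2 + max (log (coverMincard T F U n)) (log (coverMincard T G U n)) := by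
      refine (log_monotone h1).trans_eq ?_
      rw [log_mul_add, log_monotone.map_max]
    refine (monotone_div_right_of_nonneg (Nat.cast_nonneg' n) h2).trans_eq ?_
    beta_reduce
    rw [div_right_distrib_of_nonneg (by simp) ?hmax]
    · congr 1
      exact (monotone_div_right_of_nonneg (Nat.cast_nonneg' n)).map_max
    case hmax =>
      rw [le_max_iff]
      left
      exact log_coverMincard_nonneg T hF U n
  refine (limsup_le_limsup (Eventually.of_forall key)).trans ?_
  have hlim : Tendsto (fun n : ℕ ↦ log 2 / (n : EReal)) atTop (nhds 0) := by
    refine EReal.tendsto_const_div_atTop_nhds_zero_nat ?_ ?_ <;> simp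
  have h0 : limsup (fun n : ℕ ↦ log 2 / (n : EReal)) atTop = 0 := hlim.limsup_eq
  refine le_trans (limsup_add_le (Or.inl (by rw [h0]; exact zero_ne_bot))
    (Or.inl (by rw [h0]; exact zero_ne_top))) ?_
  rw [h0, zero_add, limsup_max]
  exact le_rfl

lemma coverEntropy_union [UniformSpace X] (T : X → X) (F G : Set X) :
    coverEntropy T (F ∪ G) = max (coverEntropy T F) (coverEntropy T G) := by
  refine le_antisymm (iSup₂_le fun U hU ↦ (coverEntropyEntourage_union_le T F G U).trans ?_) ?_
  · exact max_le_max (coverEntropyEntourage_le_coverEntropy T F hU)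
      (coverEntropyEntourage_le_coverEntropy T G hU)
  · exact max_le (coverEntropy_mono_set T subset_union_left)
      (coverEntropy_mono_set T subset_union_right)

end CoreEntropyAux
namespace CoreEntropyAux3
open Dynamics Set Uniformity UniformSpace Filter ENNReal EReal CoreEntropyAux
variable {X : Type*}

lemma coverEntropy_biUnion_finset [UniformSpace X] (T : X → X) {ι : Type*} (s : Finset ι)
    (K : ι → Set X) :
    coverEntropy T (⋃ i ∈ s, K i) = ⨆ i ∈ s, coverEntropy T (K i) := by
  classical
  induction s using Finset.induction_on with
  | empty => simp
  | insert _ _ ha ih =>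
      rw [Finset.set_biUnion_insert, CoreEntropyAux.coverEntropy_union, ih, Finset.iSup_insert]

lemma coverEntropy_iUnion_fintype [UniformSpace X] (T : X → X) {ι : Type*} [Fintype ι]
    (K : ι → Set X) :
    coverEntropy T (⋃ i, K i) = ⨆ i, coverEntropy T (K i) := by
  have : (⋃ i, K i) = ⋃ i ∈ Finset.univ, K i := by simp
  rw [this, coverEntropy_biUnion_finset]
  simp

end CoreEntropyAux3
namespace CoreEntropyAux4
open Dynamics Set Uniformity UniformSpace Filter ENNReal EReal CoreEntropyAux
variable {X : Type*}

lemma dynEntourage_iterate_subset (f : X → X) (U : Set (X × X)) {p : ℕ} (hp : 0 < p) (n : ℕ) :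
    dynEntourage f U (p * n) ⊆ dynEntourage f^[p] U n := by
  intro q hq
  rw [mem_dynEntourage] at hq ⊢
  intro r hr
  rw [← Function.iterate_mul]
  exact hq (p * r) ((Nat.mul_lt_mul_left hp).2 hr)

lemma coverMincard_iterate_le (f : X → X) (F : Set X) (U : Set (X × X)) {p : ℕ} (hp : 0 < p)
    (n : ℕ) :
    coverMincard f^[p] F U n ≤ coverMincard f F U (p * n) :=
  le_iInf₂ fun s hs ↦ iInf₂_le s
    (SetRel.IsCover.mono_entourage (dynEntourage_iterate_subset f U hp n) hs)

/-- The entourage adapted to `p` iterates. -/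
def iterEnt (f : X → X) (U : Set (X × X)) (p : ℕ) : Set (X × X) :=
  ⋂ j ∈ Finset.range p, (Prod.map f^[j] f^[j]) ⁻¹' U

lemma iterEnt_mem_uniformity [UniformSpace X] {f : X → X} (hf : UniformContinuous f)
    {U : Set (X × X)} (hU : U ∈ 𝓤 X) (p : ℕ) : iterEnt f U p ∈ 𝓤 X := by
  refine (Filter.biInter_mem (Finset.range p).finite_toSet).2 fun j _ ↦ ?_
  exact uniformContinuous_def.1 (UniformContinuous.iterate f j hf) U hU

lemma iterEnt_spec {f : X → X} {U : Set (X × X)} {p : ℕ} {q : X × X} (hq : q ∈ iterEnt f U p)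
    {j : ℕ} (hj : j < p) : (f^[j] q.1, f^[j] q.2) ∈ U := by
  simp only [iterEnt, Finset.mem_range, mem_iInter, mem_preimage] at hq
  exact hq j hj

lemma dynEntourage_subset_iterEnt (f : X → X) (U : Set (X × X)) {p : ℕ} (hp : 0 < p) (n : ℕ) :
    dynEntourage f^[p] (iterEnt f U p) n ⊆ dynEntourage f U (p * n) := by
  intro q hq
  rw [mem_dynEntourage] at hq ⊢
  intro m hm
  have hdiv : m / p < n := Nat.div_lt_of_lt_mul (mul_comm p n ▸ hm)
  have hmod : m % p < p := Nat.mod_lt m hp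
  have key := hq (m / p) hdiv
  rw [← Function.iterate_mul] at key
  have h1 : f^[m] q.1 = f^[m % p] (f^[p * (m / p)] q.1) := by
    rw [← Function.iterate_add_apply, Nat.mod_add_div m p]
  have h2 : f^[m] q.2 = f^[m % p] (f^[p * (m / p)] q.2) := by
    rw [← Function.iterate_add_apply, Nat.mod_add_div m p]
  rw [h1, h2]
  exact iterEnt_spec key hmod

lemma coverMincard_le_iterate (f : X → X) (F : Set X) (U : Set (X × X)) {p : ℕ} (hp : 0 < p)
    (n : ℕ) :
    coverMincard f F U (p * n) ≤ coverMincard f^[p] F (iterEnt f U p) n :=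
  le_iInf₂ fun s hs ↦ iInf₂_le s
    (SetRel.IsCover.mono_entourage (dynEntourage_subset_iterEnt f U hp n) hs)

lemma natCast_pos_EReal {p : ℕ} (hp : 0 < p) : (0 : EReal) < (p : EReal) := by
  exact_mod_cast hp

lemma natCast_ne_bot_EReal (p : ℕ) : (p : EReal) ≠ ⊥ :=
  ne_of_gt (lt_of_lt_of_le bot_lt_zero (by exact_mod_cast Nat.zero_le p))

/-- `a / n = p * (a / (p * n))` in `EReal`. -/
lemma div_eq_mul_div_mul (a : EReal) {p : ℕ} (hp : 0 < p) (n : ℕ) :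
    a / (n : EReal) = (p : EReal) * (a / ((p * n : ℕ) : EReal)) := by
  rw [EReal.natCast_mul, ← EReal.div_div, EReal.mul_div, EReal.mul_div_cancel
    (EReal.natCast_ne_bot p) (EReal.natCast_ne_top p) (by exact_mod_cast hp.ne')]

lemma tendsto_mul_atTop {p : ℕ} (hp : 0 < p) :
    Tendsto (fun n : ℕ ↦ p * n) atTop atTop :=
  tendsto_atTop_mono (fun n ↦ Nat.le_mul_of_pos_left n hp) tendsto_id

lemma coverEntropy_iterate_le [UniformSpace X] (f : X → X) {p : ℕ} (hp : 0 < p) (F : Set X) :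
    coverEntropy f^[p] F ≤ (p : EReal) * coverEntropy f F := by
  rcases F.eq_empty_or_nonempty with rfl | hFne
  · rw [coverEntropy_empty, coverEntropy_empty, EReal.mul_bot_of_pos (natCast_pos_EReal hp)]
  refine iSup₂_le fun U hU ↦ ?_
  have h1 : coverEntropyEntourage f^[p] F U
      ≤ limsup (fun n : ℕ ↦ log (coverMincard f F U (p * n)) / (n : EReal)) atTop := by
    refine limsup_le_limsup (Eventually.of_forall fun n ↦ ?_)
    exact monotone_div_right_of_nonneg (Nat.cast_nonneg' n)
      (log_monotone (ENat.toENNReal_mono (coverMincard_iterate_le f F U hp n)))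
  have h2 : (fun n : ℕ ↦ log (coverMincard f F U (p * n)) / (n : EReal))
      = fun n : ℕ ↦ ((p : ℝ) : EReal) *
          (((fun m : ℕ ↦ log (coverMincard f F U m) / (m : EReal)) ∘ (fun n : ℕ ↦ p * n)) n) := by
    funext n
    rw [Function.comp_apply, EReal.coe_coe_eq_natCast]
    exact div_eq_mul_div_mul _ hp n
  rw [h2, limsup_const_mul _ (p : ℝ) (by exact_mod_cast hp)] at h1
  refine h1.trans ?_
  rw [EReal.coe_coe_eq_natCast]
  refine mul_le_mul_left'' ?_ _ (by exact_mod_cast hp)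
  rw [limsup_comp]
  refine (limsup_le_limsup_of_le (tendsto_mul_atTop hp)).trans ?_
  exact coverEntropyEntourage_le_coverEntropy f F hU

lemma le_coverEntropyInf_iterate [UniformSpace X] {f : X → X} (hf : UniformContinuous f)
    {p : ℕ} (hp : 0 < p) (F : Set X) :
    (p : EReal) * coverEntropyInf f F ≤ coverEntropyInf f^[p] F := by
  rcases F.eq_empty_or_nonempty with rfl | hFne
  · rw [coverEntropyInf_empty, EReal.mul_bot_of_pos (natCast_pos_EReal hp)]
    exact bot_le
  rw [EReal.mul_comm, ← EReal.le_div_iff_mul_le (natCast_pos_EReal hp) (EReal.natCast_ne_top p)]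
  refine iSup₂_le fun U hU ↦ ?_
  rw [EReal.le_div_iff_mul_le (natCast_pos_EReal hp) (EReal.natCast_ne_top p), EReal.mul_comm]
  have h1 : (p : EReal) * coverEntropyInfEntourage f F U
      ≤ liminf (fun n : ℕ ↦ log (coverMincard f F U (p * n)) / (n : EReal)) atTop := by
    have h2 : (fun n : ℕ ↦ log (coverMincard f F U (p * n)) / (n : EReal))
        = fun n : ℕ ↦ ((p : ℝ) : EReal) *
            (((fun m : ℕ ↦ log (coverMincard f F U m) / (m : EReal)) ∘ (fun n : ℕ ↦ p * n)) n) := by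
      funext n
      rw [Function.comp_apply, EReal.coe_coe_eq_natCast]
      exact div_eq_mul_div_mul _ hp n
    rw [h2, liminf_const_mul _ (p : ℝ) (by exact_mod_cast hp), EReal.coe_coe_eq_natCast]
    refine mul_le_mul_left'' ?_ _ (by exact_mod_cast hp)
    rw [liminf_comp]
    exact liminf_le_liminf_of_le (tendsto_mul_atTop hp)
  refine h1.trans ?_
  have h3 : liminf (fun n : ℕ ↦ log (coverMincard f F U (p * n)) / (n : EReal)) atTop
      ≤ coverEntropyInfEntourage f^[p] F (iterEnt f U p) := by
    refine liminf_le_liminf (Eventually.of_forall fun n ↦ ?_)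
    exact monotone_div_right_of_nonneg (Nat.cast_nonneg' n)
      (log_monotone (ENat.toENNReal_mono (coverMincard_le_iterate f F U hp n)))
  exact h3.trans (coverEntropyInfEntourage_le_coverEntropyInf f^[p] F
    (iterEnt_mem_uniformity hf hU p))

end CoreEntropyAux4
set_option maxHeartbeats 1000000

namespace CoreEntropyAux5
open Dynamics Set Uniformity UniformSpace Filter ENNReal EReal CoreEntropyAux CoreEntropyAux4
open scoped SetRel
variable {X : Type*}

lemma iter_decomp (f : X → X) {a b c : ℕ} (hab : b + c = a) (r : ℕ) (x : X) :
    (f^[a])^[r + 1] x = f^[b] ((f^[a])^[r] (f^[c] x)) := by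
  rw [← Function.iterate_mul, ← Function.iterate_mul, ← Function.iterate_add_apply,
    ← Function.iterate_add_apply]
  subst hab
  congr 1
  ring

lemma isDynCoverOf_shift {f : X → X} {a b c : ℕ} (hab : b + c = a)
    {F G : Set X} (hFG : f^[c] '' F ⊆ G) {U V : Set (X × X)} (hUsymm : SetRel.IsSymm U)
    (hV : ∀ q ∈ V, (f^[b] q.1, f^[b] q.2) ∈ U)
    {n : ℕ} {s t : Finset X} (hs : IsDynCoverOf f^[a] G V n s)
    (ht : IsDynCoverOf f^[a] F U 1 t) :
    ∃ u : Finset X, IsDynCoverOf f^[a] F (U ○ U) (n + 1) u ∧ u.card ≤ s.card * t.card := by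
  classical
  set T := f^[a] with hT
  set P : X → X → X → Prop :=
    fun y z x ↦ (x, z) ∈ U ∧ (f^[c] x, y) ∈ dynEntourage T V n with hP
  set pick : X × X → X := fun yz ↦ if h : ∃ x, P yz.1 yz.2 x then h.choose else yz.2 with hpick
  refine ⟨(s ×ˢ t).image pick, ?_, (Finset.card_image_le).trans (Finset.card_product s t).le⟩
  intro x hx
  obtain ⟨z, hzt, hxz⟩ := ht hx
  rw [dynEntourage_one] at hxz
  have hcx : f^[c] x ∈ G := hFG ⟨x, hx, rfl⟩
  obtain ⟨y, hyt, hcy⟩ := hs hcx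
  have hex : ∃ v, P y z v := ⟨x, hxz, hcy⟩
  have hPw : P y z (pick (y, z)) := by
    rw [hpick]
    simp only
    rw [dif_pos hex]
    exact hex.choose_spec
  set w := pick (y, z) with hw
  refine ⟨w, ?_, ?_⟩
  · rw [Finset.mem_coe, Finset.mem_image]
    exact ⟨(y, z), Finset.mem_product.2 ⟨hyt, hzt⟩, rfl⟩
  · rw [mem_dynEntourage]
    intro m hm
    rcases m with _ | r
    · rw [Function.iterate_zero_apply, Function.iterate_zero_apply]
      exact SetRel.prodMk_mem_comp hxz (SetRel.symm U hPw.1)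
    · have hr : r < n := by omega
      set mid := f^[b] (T^[r] y) with hmid
      have h1 : (mid, T^[r + 1] w) ∈ U := by
        have := (mem_dynEntourage.1 hPw.2) r hr
        have h2 := hV _ this
        rw [← iter_decomp f hab r w] at h2
        exact SetRel.symm U h2
      have h2 : (T^[r + 1] x, mid) ∈ U := by
        have := (mem_dynEntourage.1 hcy) r hr
        have h3 := hV _ this
        rwa [← iter_decomp f hab r x] at h3
      exact SetRel.prodMk_mem_comp h2 h1

lemma coverMincard_shift_le {f : X → X} {a b c : ℕ} (hab : b + c = a)
    {F G : Set X} (hFG : f^[c] '' F ⊆ G) {U V : Set (X × X)} (hUsymm : SetRel.IsSymm U)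
    (hV : ∀ q ∈ V, (f^[b] q.1, f^[b] q.2) ∈ U)
    {t : Finset X} (ht : IsDynCoverOf f^[a] F U 1 t) (n : ℕ) :
    coverMincard f^[a] F (U ○ U) (n + 1) ≤ coverMincard f^[a] G V n * t.card := by
  rcases F.eq_empty_or_nonempty with rfl | hFne
  · simp
  have htne : t.Nonempty := by
    have := ht.nonempty hFne
    rwa [Finset.coe_nonempty] at this
  rcases eq_top_or_lt_top (coverMincard f^[a] G V n) with hG | hG
  · rw [hG, ENat.top_mul (by exact_mod_cast (Finset.card_pos.2 htne).ne')]
    exact le_top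
  obtain ⟨s, hs, hscard⟩ := (coverMincard_finite_iff _ G V n).1 hG
  obtain ⟨u, hu, hucard⟩ := isDynCoverOf_shift hab hFG hUsymm hV hs ht
  refine hu.coverMincard_le_card.trans ?_
  rw [← hscard]
  exact_mod_cast hucard

lemma div_cast_antitone {x : EReal} (hx : 0 ≤ x) {m n : ℕ} (hn : 0 < n) (hnm : n ≤ m) :
    x / (m : EReal) ≤ x / (n : EReal) := by
  induction x with
  | bot => exact absurd hx (by simp)
  | coe x =>
      have hx' : (0 : ℝ) ≤ x := by exact_mod_cast hx
      rw [← EReal.coe_coe_eq_natCast, ← EReal.coe_coe_eq_natCast, ← EReal.coe_div,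
        ← EReal.coe_div, EReal.coe_le_coe_iff]
      have hn' : (0 : ℝ) < n := by exact_mod_cast hn
      rw [div_eq_mul_inv, div_eq_mul_inv]
      refine mul_le_mul_of_nonneg_left ?_ hx'
      exact inv_anti₀ hn' (by exact_mod_cast hnm)
  | top =>
      rw [EReal.top_div_of_pos_ne_top (by exact_mod_cast hn) (EReal.natCast_ne_top n),
        EReal.top_div_of_pos_ne_top (by exact_mod_cast hn.trans_le hnm) (EReal.natCast_ne_top m)]

lemma coverEntropy_shift [UniformSpace X] {f : X → X} (hf : UniformContinuous f)
    {a b c : ℕ} (hab : b + c = a) {F G : Set X} (hF : IsCompact F)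
    (hFG : f^[c] '' F ⊆ G) :
    coverEntropy f^[a] F ≤ coverEntropy f^[a] G := by
  rcases F.eq_empty_or_nonempty with rfl | hFne
  · simp
  have hGne : G.Nonempty := ⟨f^[c] hFne.choose, hFG ⟨hFne.choose, hFne.choose_spec, rfl⟩⟩
  have hfa : UniformContinuous f^[a] := UniformContinuous.iterate f a hf
  refine iSup₂_le fun W hW ↦ ?_
  obtain ⟨U, hU, hUsymm, hUW⟩ := comp_symm_mem_uniformity_sets hW
  set V := U ∩ (Prod.map f^[b] f^[b]) ⁻¹' U with hVdef
  have hVmem : V ∈ 𝓤 X :=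
    inter_mem hU (uniformContinuous_def.1 (UniformContinuous.iterate f b hf) U hU)
  have hVspec : ∀ q ∈ V, (f^[b] q.1, f^[b] q.2) ∈ U := fun q hq ↦ hq.2
  obtain ⟨t, ht⟩ := exists_isDynCoverOf_of_isCompact_uniformContinuous hF hfa hU 1
  have htne : t.Nonempty := by
    have := ht.nonempty hFne
    rwa [Finset.coe_nonempty] at this
  have hlogt_ne_bot : log (t.card : ℝ≥0∞) ≠ ⊥ := by
    simp only [ne_eq, log_eq_bot_iff]
    exact_mod_cast (Finset.card_pos.2 htne).ne'
  have hlogt_ne_top : log (t.card : ℝ≥0∞) ≠ ⊤ := by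
    simp only [ne_eq, log_eq_top_iff]
    exact ENNReal.natCast_ne_top t.card
  have hlogt_nonneg : 0 ≤ log (t.card : ℝ≥0∞) := by
    rw [zero_le_log_iff]
    exact_mod_cast Finset.card_pos.2 htne
  set A := fun n : ℕ ↦ log (coverMincard f^[a] F (U ○ U) n) / (n : EReal) with hA
  set B := fun n : ℕ ↦ log (coverMincard f^[a] G V n) / (n : EReal) with hB
  set C := fun n : ℕ ↦ log (t.card : ℝ≥0∞) / ((n + 1 : ℕ) : EReal) with hC
  have key : ∀ n : ℕ, 1 ≤ n → A (n + 1) ≤ B n + C n := by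
    intro n hn
    have h1 : log (coverMincard f^[a] F (U ○ U) (n + 1))
        ≤ log (coverMincard f^[a] G V n) + log (t.card : ℝ≥0∞) := by
      have hle := ENat.toENNReal_mono (coverMincard_shift_le hab hFG hUsymm hVspec ht n)
      rw [ENat.toENNReal_mul, ENat.toENNReal_coe] at hle
      rw [← log_mul_add]
      exact log_monotone hle
    have hBnn : (0 : EReal) ≤ log (coverMincard f^[a] G V n) :=
      log_coverMincard_nonneg f^[a] hGne V n
    calc A (n + 1) ≤ (log (coverMincard f^[a] G V n) + log (t.card : ℝ≥0∞))
          / ((n + 1 : ℕ) : EReal) :=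
        monotone_div_right_of_nonneg (Nat.cast_nonneg' (n + 1)) h1
      _ = log (coverMincard f^[a] G V n) / ((n + 1 : ℕ) : EReal)
          + log (t.card : ℝ≥0∞) / ((n + 1 : ℕ) : EReal) :=
        div_right_distrib_of_nonneg hBnn hlogt_nonneg
      _ ≤ B n + C n := by
        refine add_le_add ?_ le_rfl
        exact div_cast_antitone hBnn (by omega) (by omega)
  have hCtend : Tendsto C atTop (nhds 0) := by
    have h0 := EReal.tendsto_const_div_atTop_nhds_zero_nat hlogt_ne_bot hlogt_ne_top
    exact h0.comp (tendsto_add_atTop_nat 1)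
  have hC0 : limsup C atTop = 0 := hCtend.limsup_eq
  have main : coverEntropyEntourage f^[a] F (U ○ U) ≤ coverEntropyEntourage f^[a] G V := by
    have e1 : coverEntropyEntourage f^[a] F (U ○ U) = limsup (fun n ↦ A (n + 1)) atTop :=
      (limsup_nat_add A 1).symm
    rw [e1]
    refine le_trans (limsup_le_limsup (eventually_atTop.2 ⟨1, fun n hn ↦ key n hn⟩)) ?_
    refine le_trans (limsup_add_le (Or.inr (by rw [hC0]; exact EReal.zero_ne_top))
      (Or.inr (by rw [hC0]; exact EReal.zero_ne_bot))) ?_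
    rw [hC0, add_zero]
    exact le_rfl
  refine le_trans (coverEntropyEntourage_antitone f^[a] F hUW) ?_
  exact main.trans (coverEntropyEntourage_le_coverEntropy f^[a] G hVmem)

lemma coverEntropy_le_of_image_subset [UniformSpace X] {f : X → X} (hf : UniformContinuous f)
    {F G : Set X} (hF : IsCompact F) (hFG : f '' F ⊆ G) :
    coverEntropy f F ≤ coverEntropy f G := by
  have h := coverEntropy_shift (G := G) hf (show 0 + 1 = 1 from rfl) hF
    (by rwa [Function.iterate_one])
  rwa [Function.iterate_one] at h

end CoreEntropyAux5
section Main
open Dynamics Set Uniformity UniformSpace Filter ENNReal EReal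
open CoreEntropyAux CoreEntropyAux3 CoreEntropyAux4 CoreEntropyAux5

/-- Abstract core-entropy formula: if `f` maps each nonempty compact set `K i` into
`K (σ i)`, then the entropy of `f` on the union of the `K i` is the maximum, over the
`σ`-periodic indices `i` (with least period `p_i = minimalPeriod σ i`), of
`(1/p_i) · h_top(f^[p_i] | K i)`. -/
theorem coverEntropy_iUnion_eq_iSup_periodic
    {X : Type*} [MetricSpace X] [CompactSpace X]
    (f : X → X) (hf : Continuous f)
    (k : ℕ) (hk : 1 ≤ k) (K : Fin k → Set X)
    (hKne : ∀ i, (K i).Nonempty) (hKcomp : ∀ i, IsCompact (K i))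
    (σ : Fin k → Fin k) (hKmap : ∀ i, f '' K i ⊆ K (σ i)) :
    coverEntropy f (⋃ i, K i)
      = ⨆ i ∈ Function.periodicPts σ,
          (1 / ((Function.minimalPeriod σ i : ℕ) : EReal))
            * coverEntropy (f^[Function.minimalPeriod σ i]) (K i) := by
  classical
  have hfu : UniformContinuous f := CompactSpace.uniformContinuous_of_continuous hf
  -- images of iterates
  have hiter : ∀ (q : ℕ) (i : Fin k), f^[q] '' K i ⊆ K (σ^[q] i) := by
    intro q
    induction q with
    | zero => intro i; simp
    | succ q ih =>
        intro i
        rw [Function.iterate_succ', Function.iterate_succ']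
        rw [Set.image_comp]
        refine subset_trans (Set.image_mono (ih i)) ?_
        exact hKmap (σ^[q] i)
  -- entropy increases along the itinerary
  have chain : ∀ (m : ℕ) (i : Fin k), coverEntropy f (K i) ≤ coverEntropy f (K (σ^[m] i)) := by
    intro m
    induction m with
    | zero => intro i; simp
    | succ m ih =>
        intro i
        refine (coverEntropy_le_of_image_subset hfu (hKcomp i) (hKmap i)).trans ?_
        have h := ih (σ i)
        rwa [← Function.iterate_succ_apply] at h
  -- every index is eventually periodic
  have hev : ∀ i : Fin k, ∃ m : ℕ, σ^[m] i ∈ Function.periodicPts σ := by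
    intro i
    obtain ⟨m, n, hmn, heq⟩ := Finite.exists_ne_map_eq_of_infinite fun n : ℕ ↦ σ^[n] i
    rcases hmn.lt_or_gt with h | h
    · refine ⟨m, Function.mk_mem_periodicPts (Nat.sub_pos_of_lt h) ?_⟩
      show σ^[n - m] (σ^[m] i) = σ^[m] i
      rw [← Function.iterate_add_apply, Nat.sub_add_cancel h.le, heq]
    · refine ⟨n, Function.mk_mem_periodicPts (Nat.sub_pos_of_lt h) ?_⟩
      show σ^[m - n] (σ^[n] i) = σ^[n] i
      rw [← Function.iterate_add_apply, Nat.sub_add_cancel h.le, ← heq]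
  -- key identity at periodic indices
  have hkey : ∀ j ∈ Function.periodicPts σ,
      ((Function.minimalPeriod σ j : ℕ) : EReal) * coverEntropy f (K j)
        = coverEntropy f^[Function.minimalPeriod σ j] (K j) := by
    intro j hj
    set p := Function.minimalPeriod σ j with hpdef
    have hp : 0 < p := Function.minimalPeriod_pos_of_mem_periodicPts hj
    have hσp : σ^[p] j = j := Function.iterate_minimalPeriod
    set Y := ⋃ q ∈ Finset.range p, K (σ^[q] j) with hYdef
    have hKY : K j ⊆ Y := by
      have h0 : (0 : ℕ) ∈ Finset.range p := Finset.mem_range.2 hp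
      refine subset_trans ?_ (subset_biUnion_of_mem h0)
      simp
    have hYcomp : IsCompact Y := (Finset.range p).isCompact_biUnion fun q _ ↦ hKcomp _
    have hmapsY : MapsTo f Y Y := by
      intro x hx
      rw [mem_iUnion₂] at hx ⊢
      obtain ⟨q, hq, hxq⟩ := hx
      rw [Finset.mem_range] at hq
      have hfx : f x ∈ K (σ^[q + 1] j) := by
        rw [Function.iterate_succ_apply']
        exact hKmap (σ^[q] j) ⟨x, hxq, rfl⟩
      rcases lt_or_eq_of_le (Nat.succ_le_of_lt hq) with h | h
      · exact ⟨q + 1, Finset.mem_range.2 h, hfx⟩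
      · refine ⟨0, Finset.mem_range.2 hp, ?_⟩
        have h' : (q + 1 : ℕ) = p := h
        rw [h', hσp] at hfx
        simpa using hfx
    have hmapsYp : MapsTo f^[p] Y Y := hmapsY.iterate p
    -- cycle equalities
    have hqle : ∀ q, q < p → coverEntropy f (K (σ^[q] j)) ≤ coverEntropy f (K j) := by
      intro q hq
      have h := chain (p - q) (σ^[q] j)
      rwa [← Function.iterate_add_apply, Nat.sub_add_cancel hq.le, hσp] at h
    have hYeq : coverEntropy f Y = coverEntropy f (K j) := by
      refine le_antisymm ?_ (coverEntropy_mono_set f hKY)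
      rw [hYdef, CoreEntropyAux3.coverEntropy_biUnion_finset]
      exact iSup₂_le fun q hq ↦ hqle q (Finset.mem_range.1 hq)
    have hqlep : ∀ q, q < p →
        coverEntropy f^[p] (K (σ^[q] j)) ≤ coverEntropy f^[p] (K j) := by
      intro q hq
      have hsub : f^[p - q] '' K (σ^[q] j) ⊆ K j := by
        have h := hiter (p - q) (σ^[q] j)
        rwa [← Function.iterate_add_apply, Nat.sub_add_cancel hq.le, hσp] at h
      exact coverEntropy_shift hfu (Nat.add_sub_cancel' hq.le) (hKcomp _) hsub
    have hYeqp : coverEntropy f^[p] Y = coverEntropy f^[p] (K j) := by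
      refine le_antisymm ?_ (coverEntropy_mono_set f^[p] hKY)
      rw [hYdef, CoreEntropyAux3.coverEntropy_biUnion_finset]
      exact iSup₂_le fun q hq ↦ hqlep q (Finset.mem_range.1 hq)
    refine le_antisymm ?_ ?_
    · calc (p : EReal) * coverEntropy f (K j)
          = (p : EReal) * coverEntropyInf f Y := by
            rw [← hYeq, coverEntropyInf_eq_coverEntropy f hmapsY]
        _ ≤ coverEntropyInf f^[p] Y := le_coverEntropyInf_iterate hfu hp Y
        _ = coverEntropy f^[p] (K j) := by
            rw [coverEntropyInf_eq_coverEntropy f^[p] hmapsYp, hYeqp]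
    · calc coverEntropy f^[p] (K j) = coverEntropy f^[p] Y := hYeqp.symm
        _ ≤ (p : EReal) * coverEntropy f Y := coverEntropy_iterate_le f hp Y
        _ = (p : EReal) * coverEntropy f (K j) := by rw [hYeq]
  -- rewrite the right-hand side
  have hRHS : ∀ j ∈ Function.periodicPts σ,
      (1 / ((Function.minimalPeriod σ j : ℕ) : EReal))
          * coverEntropy f^[Function.minimalPeriod σ j] (K j)
        = coverEntropy f (K j) := by
    intro j hj
    set p := Function.minimalPeriod σ j with hpdef
    have hp : 0 < p := Function.minimalPeriod_pos_of_mem_periodicPts hj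
    rw [← hkey j hj, one_div, ← EReal.div_eq_inv_mul,
      EReal.mul_comm ((p : ℕ) : EReal) (coverEntropy f (K j)), ← EReal.mul_div_right,
      EReal.div_mul_cancel (EReal.natCast_ne_bot p) (EReal.natCast_ne_top p)
        (by exact_mod_cast hp.ne')]
  rw [coverEntropy_iUnion_fintype f K]
  refine le_antisymm ?_ ?_
  · refine iSup_le fun i ↦ ?_
    obtain ⟨m, hm⟩ := hev i
    refine (chain m i).trans ?_
    have h := hRHS (σ^[m] i) hm
    calc coverEntropy f (K (σ^[m] i))
        = (1 / ((Function.minimalPeriod σ (σ^[m] i) : ℕ) : EReal))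
            * coverEntropy f^[Function.minimalPeriod σ (σ^[m] i)] (K (σ^[m] i)) := h.symm
      _ ≤ _ := le_iSup₂ (f := fun j (_ : j ∈ Function.periodicPts σ) ↦
            (1 / ((Function.minimalPeriod σ j : ℕ) : EReal))
              * coverEntropy f^[Function.minimalPeriod σ j] (K j)) (σ^[m] i) hm
  · refine iSup₂_le fun j hj ↦ ?_
    rw [hRHS j hj]
    exact le_iSup (fun i ↦ coverEntropy f (K i)) j

end Main
end
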